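/- arXiv:2401.09845 — 16 statements merged into one kernel-verified Lean document; each statement's English description precedes it below -/
import Mathlib

section
/- If C is hierarchical (its elements can be arranged in a sequence S_1, …, S_l such that for every k = 2, …, l, (i) S_1 meets S_k, and (ii) there exists T ∈ C which misses S_k and meets each of S_1, …, S_{k−1}), then C has full span, i.e., the family of MM-games {w_S}_{S∈C} is a basis of ℝ^C. -/
open Finset
open scoped Classical

/-! Common definitions: games on a collection `C` of coalitions of a finite
player set `N`, MM-games, full span, assignments, representations, the
equitable solution, and the Shapley value. -/

/-- The MM-game `w_S`, as a vector in `ℝ^C`: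
`w_S(T) = 1` if `S` meets `T` (i.e. `S ∩ T ≠ ∅`) and `0` if `S` misses `T`. -/
noncomputable def mmGame {N : Type} [DecidableEq N] (C : Finset (Finset N))
    (S : Finset N) : {T : Finset N // T ∈ C} → ℝ :=
  fun T => if (S ∩ T.1).Nonempty then 1 else 0

/-- `C` has full span: the family of MM-games `{w_S}_{S ∈ C}` is a basis of `ℝ^C`,
i.e. it is linearly independent and spans `ℝ^C`. -/
def FullSpan {N : Type} [DecidableEq N] (C : Finset (Finset N)) : Prop :=
  LinearIndependent ℝ (fun S : {S : Finset N // S ∈ C} => mmGame C S.1) ∧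
  Submodule.span ℝ (Set.range fun S : {S : Finset N // S ∈ C} => mmGame C S.1) = ⊤

/-- The full user-set `ψ⁻¹(k) = {n ∈ N : k ∈ ψ(n)}` of facility `k`. -/
noncomputable def userSet {N K : Type} [Fintype N] (ψ : N → Finset K) (k : K) :
    Finset N :=
  Finset.univ.filter fun n => k ∈ ψ n

/-- `(ψ, γ)` is a representation of the game `v : C → ℝ`.  The set of facilities
is `K = ψ(N) = ⋃_{n ∈ N} ψ(n)` (every facility has a nonempty full user-set);
we require `ψ⁻¹(k) ∈ C` for every facility `k`, and
`v(S) = ∑_{k ∈ ψ(S)} γ(k)` for every `S ∈ C`, where `ψ(S) = ⋃_{n ∈ S} ψ(n)`. -/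
def IsRep {N : Type} [Fintype N] [DecidableEq N] (C : Finset (Finset N))
    (v : {T : Finset N // T ∈ C} → ℝ) {K : Type} (ψ : N → Finset K)
    (γ : K → ℝ) : Prop :=
  (∀ k ∈ Finset.univ.biUnion ψ, userSet ψ k ∈ C) ∧
  ∀ T : {T : Finset N // T ∈ C}, v T = ∑ k ∈ T.1.biUnion ψ, γ k

/-- The equitable solution `τ(ψ, γ) ∈ ℝ^N`:
`τ_n(ψ,γ) = ∑_{k ∈ ψ(n)} γ(k)/|ψ⁻¹(k)|`. -/
noncomputable def tau {N K : Type} [Fintype N] (ψ : N → Finset K) (γ : K → ℝ)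
    (n : N) : ℝ :=
  ∑ k ∈ ψ n, γ k / ((userSet ψ k).card : ℝ)

/-- The Shapley value `φ_n(v)` of a game on all coalitions of `N`
(`v ∅` is understood to be `0`):
`φ_n(v) = ∑_{S ⊆ N∖{n}} (|S|!(|N|−1−|S|)!/|N|!)·(v(S∪{n}) − v(S))`. -/
noncomputable def shapley {N : Type} [Fintype N] [DecidableEq N]
    (v : Finset N → ℝ) (n : N) : ℝ :=
  ∑ S ∈ (Finset.univ.erase n).powerset,
    ((S.card.factorial : ℝ) * ((Fintype.card N - 1 - S.card).factorial : ℝ) /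
      ((Fintype.card N).factorial : ℝ)) * (v (insert n S) - v S)

/-- `C` is a semi-algebra: `N ∈ C`, and `N∖S ∈ C` for every `S ∈ C` with `S ≠ N`. -/
def IsSemiAlgebra {N : Type} [Fintype N] [DecidableEq N]
    (C : Finset (Finset N)) : Prop :=
  Finset.univ ∈ C ∧ ∀ S ∈ C, S ≠ Finset.univ → Finset.univ \ S ∈ C

/-- `C` is hierarchical: its elements can be arranged in a sequence
`S_1, …, S_l` such that for every `k = 2, …, l`, (i) `S_1` meets `S_k`, and
(ii) some `T ∈ C` misses `S_k` and meets each of `S_1, …, S_{k−1}`.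
(Indices are `0, …, l-1` here, with `S_1` the element of index `0`.) -/
def IsHierarchy {N : Type} [DecidableEq N] (C : Finset (Finset N)) : Prop :=
  ∃ (l : ℕ) (hl : 0 < l) (S : Fin l → Finset N),
    Function.Injective S ∧ (∀ k, S k ∈ C) ∧ (∀ T ∈ C, ∃ k, S k = T) ∧
    ∀ k : Fin l, 0 < (k : ℕ) →
      ((S ⟨0, hl⟩ ∩ S k).Nonempty ∧
       ∃ T ∈ C, T ∩ S k = ∅ ∧
         ∀ j : Fin l, (j : ℕ) < (k : ℕ) → (T ∩ S j).Nonempty)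

/-- Players `i` and `j` are symmetric in the game `v : C → ℝ`. -/
def SymmetricPlayers {N : Type} [DecidableEq N] (C : Finset (Finset N))
    (v : {T : Finset N // T ∈ C} → ℝ) (i j : N) : Prop :=
  ∀ T : Finset N, i ∉ T → j ∉ T →
    (insert i T ∈ C ↔ insert j T ∈ C) ∧
    ∀ (hi : insert i T ∈ C) (hj : insert j T ∈ C),
      v ⟨insert i T, hi⟩ = v ⟨insert j T, hj⟩

/-- Player `i` is a dummy in the game `v : C → ℝ`. -/
def DummyPlayer {N : Type} [DecidableEq N] (C : Finset (Finset N))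
    (v : {T : Finset N // T ∈ C} → ℝ) (i : N) : Prop :=
  (∀ h : ({i} : Finset N) ∈ C, v ⟨{i}, h⟩ = 0) ∧
  ∀ T : Finset N, T.Nonempty → i ∉ T →
    (insert i T ∈ C ↔ T ∈ C) ∧
    ∀ (hiT : insert i T ∈ C) (hT : T ∈ C), v ⟨insert i T, hiT⟩ = v ⟨T, hT⟩

/-- If `C` is hierarchical, then `C` has full span. -/
theorem hierarchical_imp_fullSpan {N : Type} [Fintype N] [DecidableEq N]
    [Nonempty N] (C : Finset (Finset N)) (hCne : C.Nonempty)
    (hmem : ∀ S ∈ C, S.Nonempty) (hcover : ∀ n : N, ∃ S ∈ C, n ∈ S)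
    (hhier : IsHierarchy C) : FullSpan C := by
  obtain ⟨l, hl, S, hinj, hmemS, hsurj, hh⟩ := hhier
  have hli : LinearIndependent ℝ (fun S : {S : Finset N // S ∈ C} => mmGame C S.1) := by
    rw [Fintype.linearIndependent_iff]
    intro g hg
    set c : Fin l → ℝ := fun k => g ⟨S k, hmemS k⟩ with hc
    have hbij : Function.Bijective
        (fun k : Fin l => (⟨S k, hmemS k⟩ : {S : Finset N // S ∈ C})) := by
      constructor
      · intro a b hab
        exact hinj (by simpa using hab)
      · rintro ⟨T, hT⟩
        obtain ⟨k, hk⟩ := hsurj T hT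
        exact ⟨k, by simp [hk]⟩
    have hsum : ∀ T : {T : Finset N // T ∈ C},
        ∑ k : Fin l, c k * (if (S k ∩ T.1).Nonempty then (1 : ℝ) else 0) = 0 := by
      intro T
      have h0 : ∑ i : {S : Finset N // S ∈ C}, g i * mmGame C i.1 T = 0 := by
        have h1 := congrFun hg T
        simpa [Finset.sum_apply] using h1
      calc ∑ k : Fin l, c k * (if (S k ∩ T.1).Nonempty then (1 : ℝ) else 0)
          = ∑ i : {S : Finset N // S ∈ C}, g i * mmGame C i.1 T :=
            Fintype.sum_bijective _ hbij _ _ (fun k => rfl)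
        _ = 0 := h0
    have hS0 : ∀ k : Fin l, (S k ∩ S ⟨0, hl⟩).Nonempty := by
      intro k
      by_cases hk : 0 < (k : ℕ)
      · have := (hh k hk).1
        rwa [Finset.inter_comm] at this
      · have hk0 : k = ⟨0, hl⟩ := by
          apply Fin.ext; simp only [Fin.val_mk]; omega
        subst hk0
        rw [Finset.inter_self]
        exact hmem _ (hmemS _)
    have eq1 : ∑ k : Fin l, c k = 0 := by
      have h1 := hsum ⟨S ⟨0, hl⟩, hmemS _⟩
      rw [← h1]
      refine Finset.sum_congr rfl (fun k _ => ?_)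
      rw [if_pos (hS0 k), mul_one]
    have key : ∀ d : ℕ, ∀ k : Fin l, l - (k : ℕ) ≤ d → 0 < (k : ℕ) → c k = 0 := by
      intro d
      induction d with
      | zero => intro k hd _; exact absurd hd (by have := k.isLt; omega)
      | succ d ih =>
        intro k hd hk
        obtain ⟨hmeet0, T, hTC, hTdisj, hTmeet⟩ := hh k hk
        have hzero : ∀ j : Fin l, (k : ℕ) < (j : ℕ) → c j = 0 := fun j hj =>
          ih j (by have := j.isLt; omega) (by omega)
        have e2 := hsum ⟨T, hTC⟩
        have e3 : ∑ j : Fin l,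
            (c j - c j * (if (S j ∩ T).Nonempty then (1 : ℝ) else 0)) = 0 := by
          rw [Finset.sum_sub_distrib, eq1, e2, sub_zero]
        have e4 : ∑ j : Fin l,
            (c j - c j * (if (S j ∩ T).Nonempty then (1 : ℝ) else 0)) = c k := by
          rw [Finset.sum_eq_single_of_mem k (Finset.mem_univ k)]
          · have hkT : S k ∩ T = ∅ := by rw [Finset.inter_comm]; exact hTdisj
            rw [if_neg (by simp [hkT]), mul_zero, sub_zero]
          · intro j _ hjk
            have hne : (j : ℕ) ≠ (k : ℕ) := fun h => hjk (Fin.ext h)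
            rcases lt_or_gt_of_ne hne with h | h
            · rw [if_pos, mul_one, sub_self]
              rw [Finset.inter_comm]
              exact hTmeet j h
            · rw [hzero j h]; ring
        rw [e4] at e3
        exact e3
    have hall : ∀ k : Fin l, c k = 0 := by
      intro k
      by_cases hk : 0 < (k : ℕ)
      · exact key l k (by omega) hk
      · have hk0 : k = ⟨0, hl⟩ := by
          apply Fin.ext; simp only [Fin.val_mk]; omega
        subst hk0
        have h2 : ∑ j : Fin l, c j = c ⟨0, hl⟩ := by
          rw [Finset.sum_eq_single_of_mem ⟨0, hl⟩ (Finset.mem_univ _)]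
          intro j _ hjk
          refine key l j (by omega) ?_
          rcases Nat.eq_zero_or_pos (j : ℕ) with h | h
          · exact absurd (Fin.ext (by simp only [Fin.val_mk]; omega)) hjk
          · exact h
        rw [eq1] at h2
        exact h2.symm
    intro i
    obtain ⟨k, hk⟩ := hbij.2 i
    rw [← hk]
    exact hall k
  refine ⟨hli, ?_⟩
  have : Nonempty {S : Finset N // S ∈ C} := ⟨⟨hCne.choose, hCne.choose_spec⟩⟩
  exact hli.span_eq_top_of_card_eq_finrank
    (by rw [Module.finrank_fintype_fun_eq_card])
end

section
/- If C is a semi-algebra (i.e., N ∈ C and for every S ∈ C with S ≠ N also N∖S ∈ C), then C has full span, i.e., the family of MM-games {w_S}_{S∈C} is a basis of ℝ^C. -/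
open Finset
open scoped Classical

/-- If `C` is a semi-algebra, then `C` has full span. -/
theorem semiAlgebra_imp_fullSpan {N : Type} [Fintype N] [DecidableEq N]
    [Nonempty N] (C : Finset (Finset N)) (hCne : C.Nonempty)
    (hmem : ∀ S ∈ C, S.Nonempty) (hcover : ∀ n : N, ∃ S ∈ C, n ∈ S)
    (hsa : IsSemiAlgebra C) : FullSpan C := by
  classical
  set w : {S : Finset N // S ∈ C} → ({T : Finset N // T ∈ C} → ℝ) :=
    fun S => mmGame C S.1 with hw
  set e : {S : Finset N // S ∈ C} → ({T : Finset N // T ∈ C} → ℝ) :=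
    fun R T => if T.1 ⊆ R.1 then 1 else 0 with he
  -- each e R is in the span of the w's
  have hA : ∀ R : {S : Finset N // S ∈ C}, e R ∈ Submodule.span ℝ (Set.range w) := by
    intro R
    have hNmem : (Finset.univ : Finset N) ∈ C := hsa.1
    have hwN : w ⟨Finset.univ, hNmem⟩ = fun _ => 1 := by
      funext T
      simp only [hw, mmGame, Finset.univ_inter]
      rw [if_pos (hmem T.1 T.2)]
    by_cases hRN : R.1 = Finset.univ
    · have : e R = w ⟨Finset.univ, hNmem⟩ := by
        funext T
        simp only [he, hwN, hRN, Finset.subset_univ, if_true]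
      rw [this]; exact Submodule.subset_span ⟨_, rfl⟩
    · have hScomp : Finset.univ \ R.1 ∈ C := hsa.2 R.1 R.2 hRN
      have : e R = w ⟨Finset.univ, hNmem⟩ - w ⟨Finset.univ \ R.1, hScomp⟩ := by
        funext T
        have hiff : ¬((Finset.univ \ R.1) ∩ T.1).Nonempty ↔ T.1 ⊆ R.1 := by
          rw [Finset.not_nonempty_iff_eq_empty]
          constructor
          · intro h x hx
            by_contra hxR
            have : x ∈ (Finset.univ \ R.1) ∩ T.1 := by
              simp [hx, hxR]
            simp [h] at this
          · intro h
            ext x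
            simp only [Finset.mem_inter, Finset.mem_sdiff, Finset.mem_univ, true_and,
              Finset.notMem_empty, iff_false]
            rintro ⟨hxR, hxT⟩
            exact hxR (h hxT)
        simp only [he, hw, mmGame, Pi.sub_apply, Finset.univ_inter]
        rw [if_pos (hmem T.1 T.2)]
        by_cases h : T.1 ⊆ R.1
        · rw [if_pos h, if_neg (hiff.mpr h)]; norm_num
        · rw [if_neg h, if_pos (by by_contra hc; exact h (hiff.mp hc))]; norm_num
      rw [this]
      exact Submodule.sub_mem _ (Submodule.subset_span ⟨_, rfl⟩)
        (Submodule.subset_span ⟨_, rfl⟩)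
  -- each Pi.single T 1 is in the span of the e's
  have hB : ∀ T : {S : Finset N // S ∈ C},
      Pi.single T (1 : ℝ) ∈ Submodule.span ℝ (Set.range e) := by
    intro T
    induction' hn : T.1.card using Nat.strong_induction_on with c IH generalizing T
    subst hn
    have key : e T = ∑ U ∈ Finset.univ.filter
        (fun U : {S : Finset N // S ∈ C} => U.1 ⊆ T.1), Pi.single U (1 : ℝ) := by
      funext V
      rw [Finset.sum_apply]
      rw [Finset.sum_pi_single]
      simp only [he, Finset.mem_filter, Finset.mem_univ, true_and]

    have hsplit : Pi.single T (1 : ℝ) = e T - ∑ U ∈ Finset.univ.filter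
        (fun U : {S : Finset N // S ∈ C} => U.1 ⊆ T.1 ∧ U ≠ T), Pi.single U (1 : ℝ) := by
      rw [key]
      have : Finset.univ.filter (fun U : {S : Finset N // S ∈ C} => U.1 ⊆ T.1)
          = insert T (Finset.univ.filter
            (fun U : {S : Finset N // S ∈ C} => U.1 ⊆ T.1 ∧ U ≠ T)) := by
        ext U
        simp only [Finset.mem_filter, Finset.mem_univ, true_and, Finset.mem_insert]
        by_cases hUT : U = T
        · simp [hUT]
        · simp [hUT]
      rw [this, Finset.sum_insert (by simp)]
      abel
    rw [hsplit]
    refine Submodule.sub_mem _ (Submodule.subset_span ⟨T, rfl⟩) (Submodule.sum_mem _ ?_)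
    intro U hU
    simp only [Finset.mem_filter, Finset.mem_univ, true_and] at hU
    have hss : U.1 ⊂ T.1 := lt_of_le_of_ne hU.1 (fun h => hU.2 (Subtype.ext h))
    exact IH U.1.card (Finset.card_lt_card hss) U rfl
  -- span of e's is top
  have hespan : (⊤ : Submodule ℝ ({T : Finset N // T ∈ C} → ℝ))
      ≤ Submodule.span ℝ (Set.range e) := by
    rw [← (Pi.basisFun ℝ {T : Finset N // T ∈ C}).span_eq]
    refine Submodule.span_le.mpr ?_
    rintro _ ⟨T, rfl⟩
    rw [Pi.basisFun_apply]
    exact hB T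
  have hwspan : (⊤ : Submodule ℝ ({T : Finset N // T ∈ C} → ℝ))
      ≤ Submodule.span ℝ (Set.range w) := by
    refine le_trans hespan (Submodule.span_le.mpr ?_)
    rintro _ ⟨R, rfl⟩
    exact hA R
  constructor
  · apply linearIndependent_of_top_le_span_of_card_eq_finrank hwspan
    rw [Module.finrank_fintype_fun_eq_card]
  · exact top_le_iff.mp hwspan
end

section
/- Let 𝒩 be the collection of all nonempty subsets of the finite nonempty set N. Then 𝒩 has full span: the family of MM-games {w_S}_{S∈𝒩} is a basis of ℝ^𝒩. -/
open Finset
open scoped Classical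

/-- The collection `𝒩` of all nonempty subsets of `N` has full span. -/
theorem allCoalitions_fullSpan {N : Type} [Fintype N] [DecidableEq N]
    [Nonempty N] :
    FullSpan (Finset.univ.filter fun S : Finset N => S.Nonempty) := by
  classical
  set C := Finset.univ.filter fun S : Finset N => S.Nonempty with hC
  have hmemC : ∀ S : Finset N, S ∈ C ↔ S.Nonempty := by
    intro S; simp [hC]
  have hne : Nonempty {S : Finset N // S ∈ C} :=
    ⟨⟨Finset.univ, (hmemC _).2 Finset.univ_nonempty⟩⟩
  have hli : LinearIndependent ℝ (fun S : {S : Finset N // S ∈ C} => mmGame C S.1) := by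
    rw [Fintype.linearIndependent_iff]
    intro c hc
    set g : Finset N → ℝ := fun S => if h : S ∈ C then c ⟨S, h⟩ else 0 with hg
    set f : Finset N → ℝ := fun A => ∑ S ∈ A.powerset, g S with hf
    have hgnot : ∀ S : Finset N, S ∉ C → g S = 0 := by
      intro S hS; simp [hg, hS]
    have key : ∀ T : Finset N, T.Nonempty →
        f Finset.univ - f (Finset.univ \ T) = 0 := by
      intro T hT
      have hTC : T ∈ C := (hmemC T).2 hT
      have h1 := congrFun hc ⟨T, hTC⟩
      simp only [Finset.sum_apply, Pi.smul_apply, Pi.zero_apply, smul_eq_mul,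
        mmGame] at h1
      have h2 : (∑ x ∈ C, g x * if (x ∩ T).Nonempty then 1 else 0) = 0 := by
        refine Eq.trans ?_ h1
        rw [← Finset.sum_attach C (fun S => g S * (if (S ∩ T).Nonempty then 1 else 0))]
        refine Finset.sum_congr rfl fun x _ => ?_
        simp [hg, x.2]
      have heq := Finset.sum_subset (Finset.subset_univ C)
        (f := fun S => g S * if (S ∩ T).Nonempty then 1 else 0)
        (fun x _ hx => by simp [hgnot x hx])
      have h3 : (∑ S : Finset N, g S * if (S ∩ T).Nonempty then 1 else 0) = 0 :=
        heq.symm.trans h2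
      have h4 : (∑ S : Finset N, g S * if (S ∩ T).Nonempty then 1 else 0)
          = ∑ S ∈ Finset.univ.filter (fun S : Finset N => (S ∩ T).Nonempty), g S := by
        rw [Finset.sum_filter]
        refine Finset.sum_congr rfl fun S _ => ?_
        split <;> simp
      have h5 : Finset.univ.filter (fun S : Finset N => ¬(S ∩ T).Nonempty)
          = (Finset.univ \ T).powerset := by
        ext S
        simp only [Finset.mem_filter, Finset.mem_univ, true_and,
          Finset.mem_powerset, Finset.not_nonempty_iff_eq_empty,
          Finset.eq_empty_iff_forall_notMem, Finset.subset_iff,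
          Finset.mem_sdiff, Finset.mem_inter]
        tauto
      have h6 := Finset.sum_filter_add_sum_filter_not Finset.univ
        (fun S : Finset N => (S ∩ T).Nonempty) g
      rw [h5] at h6
      have hfu : f Finset.univ = ∑ S : Finset N, g S := by
        simp only [hf, Finset.powerset_univ]
      have hfT : f (Finset.univ \ T) = ∑ S ∈ (Finset.univ \ T).powerset, g S := rfl
      rw [h4] at h3
      rw [hfu, hfT, ← h6]
      linarith
    have hfuniv : f Finset.univ = 0 := by
      have h0 : f ∅ = 0 := by
        have : f ∅ = g ∅ := by
          simp only [hf, Finset.powerset_empty, Finset.sum_singleton]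
        rw [this]
        exact hgnot ∅ (by simp [hmemC])
      have := key Finset.univ Finset.univ_nonempty
      rw [Finset.sdiff_self] at this
      rw [h0] at this; linarith
    have hf0 : ∀ A : Finset N, f A = 0 := by
      intro A
      by_cases hA : A = Finset.univ
      · rw [hA]; exact hfuniv
      · have hT : (Finset.univ \ A).Nonempty := by
          rw [Finset.sdiff_nonempty]
          exact fun h => hA (Finset.univ_subset_iff.mp h)
        have h := key _ hT
        rw [Finset.sdiff_sdiff_eq_self (Finset.subset_univ A), hfuniv] at h
        linarith
    have hg0 : ∀ n (S : Finset N), S.card = n → g S = 0 := by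
      intro n
      induction n using Nat.strong_induction_on with
      | _ n ih =>
        intro S hcard
        have hfS : ∑ A ∈ S.powerset, g A = 0 := hf0 S
        have hSsp : S ∈ S.powerset := Finset.mem_powerset_self S
        rw [← Finset.add_sum_erase _ g hSsp] at hfS
        have hz : ∑ A ∈ S.powerset.erase S, g A = 0 := by
          refine Finset.sum_eq_zero fun A hA => ?_
          rw [Finset.mem_erase, Finset.mem_powerset] at hA
          have hlt : A.card < n := by
            rw [← hcard]
            exact Finset.card_lt_card (lt_of_le_of_ne hA.2 hA.1)
          exact ih A.card hlt A rfl
        rw [hz] at hfS; linarith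
    intro S
    have := hg0 S.1.card S.1 rfl
    simpa [hg, S.2] using this
  refine ⟨hli, ?_⟩
  apply hli.span_eq_top_of_card_eq_finrank
  simp [Module.finrank_fintype_fun_eq_card]
end

section
/- Assume C has full span. Then every game v : C → ℝ has a representation; explicitly, if v = Σ_{S∈C} c_S·w_S is the unique expansion of v in the MM-basis, then the assignment with facility set K = C, ψ(n) = {S ∈ C : n ∈ S} for each n ∈ N, and γ(S) = c_S for each S ∈ C, is a representation of v. -/
open Finset
open scoped Classical

/-- If `C` has full span then every game `v : C → ℝ` has a
representation; explicitly, if `v = Σ_{S∈C} c_S • w_S` is the expansion of `v`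
in the MM-basis, then the assignment with facility set `K = C`,
`ψ(n) = {S ∈ C : n ∈ S}` and `γ(S) = c_S` is a representation of `v`. -/
theorem canonical_representation {N : Type} [Fintype N] [DecidableEq N]
    [Nonempty N] (C : Finset (Finset N)) (hCne : C.Nonempty)
    (hmem : ∀ S ∈ C, S.Nonempty) (hcover : ∀ n : N, ∃ S ∈ C, n ∈ S)
    (hfs : FullSpan C) (v : {T : Finset N // T ∈ C} → ℝ)
    (c : {S : Finset N // S ∈ C} → ℝ)
    (hv : v = ∑ S : {S : Finset N // S ∈ C}, c S • mmGame C S.1) :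
    (∀ u : {T : Finset N // T ∈ C} → ℝ,
      ∃ (K : Type) (ψ : N → Finset K) (γ : K → ℝ), IsRep C u ψ γ) ∧
    IsRep C v
      (fun n => Finset.univ.filter fun S : {S : Finset N // S ∈ C} => n ∈ S.1)
      c := by
  have key : ∀ d : {S : Finset N // S ∈ C} → ℝ,
      IsRep C (∑ S : {S : Finset N // S ∈ C}, d S • mmGame C S.1)
        (fun n => Finset.univ.filter fun S : {S : Finset N // S ∈ C} => n ∈ S.1)
        d := by
    intro d
    constructor
    · intro k _
      have : userSet (fun n => Finset.univ.filter
          fun S : {S : Finset N // S ∈ C} => n ∈ S.1) k = k.1 := by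
        ext n
        simp [userSet]
      rw [this]; exact k.2
    · intro T
      simp only [Finset.sum_apply, Pi.smul_apply, mmGame, smul_eq_mul,
        mul_ite, mul_one, mul_zero]
      rw [← Finset.sum_filter]
      exact Finset.sum_congr (Finset.ext fun S => by
        simp [Finset.Nonempty, Finset.mem_inter, and_comm]) fun _ _ => rfl
  refine ⟨?_, hv ▸ key c⟩
  intro u
  have hu : u ∈ Submodule.span ℝ
      (Set.range fun S : {S : Finset N // S ∈ C} => mmGame C S.1) := by
    rw [hfs.2]; trivial
  rw [Finsupp.mem_span_range_iff_exists_finsupp] at hu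
  obtain ⟨d, hd⟩ := hu
  refine ⟨{S : Finset N // S ∈ C},
    fun n => Finset.univ.filter fun S : {S : Finset N // S ∈ C} => n ∈ S.1,
    fun S => d S, ?_⟩
  have : u = ∑ S : {S : Finset N // S ∈ C}, d S • mmGame C S.1 := by
    rw [← hd, Finsupp.sum_fintype]
    intro; simp
  rw [this]
  exact key d
end

section
/- Assume C has full span and let v = Σ_{S∈C} c_S·w_S be the unique expansion of v : C → ℝ in the MM-basis. Then for every representation (ψ, γ) of v with facility set K and every S ∈ C, the total cost of the facilities whose full user-set equals S is c_S, i.e., Σ_{k ∈ K : ψ⁻¹(k) = S} γ(k) = c_S. -/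
open Finset
open scoped Classical

/-- If `C` has full span and `v = Σ_{S∈C} c_S • w_S` is the
expansion of `v` in the MM-basis, then in every representation `(ψ, γ)` of `v`
the total cost of the facilities whose full user-set equals `S` is `c_S`. -/
theorem rep_coefficients {N : Type} [Fintype N] [DecidableEq N] [Nonempty N]
    (C : Finset (Finset N)) (hCne : C.Nonempty)
    (hmem : ∀ S ∈ C, S.Nonempty) (hcover : ∀ n : N, ∃ S ∈ C, n ∈ S)
    (hfs : FullSpan C) (v : {T : Finset N // T ∈ C} → ℝ)
    (c : {S : Finset N // S ∈ C} → ℝ)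
    (hv : v = ∑ S : {S : Finset N // S ∈ C}, c S • mmGame C S.1)
    {K : Type} (ψ : N → Finset K) (γ : K → ℝ) (hrep : IsRep C v ψ γ) :
    ∀ S : {S : Finset N // S ∈ C},
      ∑ k ∈ (Finset.univ.biUnion ψ).filter (fun k => userSet ψ k = S.1), γ k
        = c S := by
  classical
  set f : {S : Finset N // S ∈ C} → ℝ := fun S =>
    ∑ k ∈ (Finset.univ.biUnion ψ).filter (fun k => userSet ψ k = S.1), γ k with hf
  have key : ∀ T : {T : Finset N // T ∈ C},
      v T = ∑ S : {S : Finset N // S ∈ C}, f S * mmGame C S.1 T := by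
    intro T
    have hT : T.1.biUnion ψ =
        (Finset.univ.biUnion ψ).filter (fun k => (userSet ψ k ∩ T.1).Nonempty) := by
      ext k
      simp only [Finset.mem_biUnion, Finset.mem_filter, Finset.mem_univ, true_and]
      constructor
      · rintro ⟨n, hn, hk⟩
        refine ⟨⟨n, hk⟩, ⟨n, ?_⟩⟩
        simp [userSet, Finset.mem_inter, hk, hn]
      · rintro ⟨-, ⟨n, hn⟩⟩
        rw [Finset.mem_inter] at hn
        simp only [userSet, Finset.mem_filter, Finset.mem_univ, true_and] at hn
        exact ⟨n, hn.2, hn.1⟩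
    have h1 : v T = ∑ k ∈ Finset.univ.biUnion ψ,
        if (userSet ψ k ∩ T.1).Nonempty then γ k else 0 := by
      rw [hrep.2 T, hT, Finset.sum_filter]
    have h2 : ∑ k ∈ Finset.univ.biUnion ψ,
        (if (userSet ψ k ∩ T.1).Nonempty then γ k else 0)
        = ∑ S ∈ C, ∑ k ∈ (Finset.univ.biUnion ψ).filter (fun k => userSet ψ k = S),
            (if (userSet ψ k ∩ T.1).Nonempty then γ k else 0) := by
      exact (Finset.sum_fiberwise_of_maps_to (fun k hk => hrep.1 k hk) _).symm
    have h3 : ∀ S ∈ C,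
        (∑ k ∈ (Finset.univ.biUnion ψ).filter (fun k => userSet ψ k = S),
            (if (userSet ψ k ∩ T.1).Nonempty then γ k else 0))
        = (∑ k ∈ (Finset.univ.biUnion ψ).filter (fun k => userSet ψ k = S), γ k)
            * (if (S ∩ T.1).Nonempty then 1 else 0) := by
      intro S hS
      by_cases h : (S ∩ T.1).Nonempty
      · rw [if_pos h, mul_one]
        refine Finset.sum_congr rfl fun k hk => ?_
        obtain ⟨-, hk⟩ := Finset.mem_filter.mp hk
        rw [hk, if_pos h]
      · rw [if_neg h, mul_zero]
        refine Finset.sum_eq_zero fun k hk => ?_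
        obtain ⟨-, hk⟩ := Finset.mem_filter.mp hk
        rw [hk, if_neg h]
    have h4 : ∑ S : {S : Finset N // S ∈ C}, f S * mmGame C S.1 T
        = ∑ S ∈ C.attach, f S * mmGame C S.1 T := rfl
    rw [h1, h2, Finset.sum_congr rfl h3, h4, ← Finset.sum_attach C
      (fun S => (∑ k ∈ (Finset.univ.biUnion ψ).filter (fun k => userSet ψ k = S), γ k)
          * (if (S ∩ T.1).Nonempty then 1 else 0))]
    rfl
  have hv' : ∀ T : {T : Finset N // T ∈ C},
      v T = ∑ S : {S : Finset N // S ∈ C}, c S * mmGame C S.1 T := by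
    intro T
    simp only [hv, Finset.sum_apply, Pi.smul_apply, smul_eq_mul]
  have h0 : ∑ S : {S : Finset N // S ∈ C}, (f S - c S) • mmGame C S.1 = 0 := by
    funext T
    have hk := key T
    rw [hv' T] at hk
    simp only [Finset.sum_apply, Pi.zero_apply, Pi.sub_apply, Pi.smul_apply, sub_smul,
      smul_eq_mul, Finset.sum_sub_distrib]
    rw [hk, sub_self]
  intro S
  have := Fintype.linearIndependent_iff.mp hfs.1 (fun S => f S - c S) h0 S
  have : f S = c S := by linarith
  exact this
end

section
/- Assume C has full span and let v = Σ_{S∈C} c_S·w_S be the unique expansion of v : C → ℝ in the MM-basis. Then every representation of v has at least |{S ∈ C : c_S ≠ 0}| facilities, and there exists a representation of v with exactly |{S ∈ C : c_S ≠ 0}| facilities. -/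
open Finset
open scoped Classical

/-- If `C` has full span and `v = Σ_{S∈C} c_S • w_S` is the
expansion of `v` in the MM-basis, then every representation of `v` has at
least `|{S ∈ C : c_S ≠ 0}|` facilities, and some representation of `v` has
exactly `|{S ∈ C : c_S ≠ 0}|` facilities. -/
theorem minimal_representation {N : Type} [Fintype N] [DecidableEq N]
    [Nonempty N] (C : Finset (Finset N)) (hCne : C.Nonempty)
    (hmem : ∀ S ∈ C, S.Nonempty) (hcover : ∀ n : N, ∃ S ∈ C, n ∈ S)
    (hfs : FullSpan C) (v : {T : Finset N // T ∈ C} → ℝ)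
    (c : {S : Finset N // S ∈ C} → ℝ)
    (hv : v = ∑ S : {S : Finset N // S ∈ C}, c S • mmGame C S.1) :
    (∀ (K : Type) (ψ : N → Finset K) (γ : K → ℝ), IsRep C v ψ γ →
      (Finset.univ.filter fun S : {S : Finset N // S ∈ C} => c S ≠ 0).card ≤
        (Finset.univ.biUnion ψ).card) ∧
    (∃ (K : Type) (ψ : N → Finset K) (γ : K → ℝ), IsRep C v ψ γ ∧
      (Finset.univ.biUnion ψ).card =
        (Finset.univ.filter fun S : {S : Finset N // S ∈ C} => c S ≠ 0).card) := by
  classical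
  obtain ⟨hli, -⟩ := hfs
  -- coefficients are determined by any representation
  have key : ∀ (K : Type) (ψ : N → Finset K) (γ : K → ℝ), IsRep C v ψ γ →
      ∀ S : {S : Finset N // S ∈ C}, c S =
        ∑ k ∈ (Finset.univ.biUnion ψ).filter (fun k => userSet ψ k = S.1), γ k := by
    intro K ψ γ hrep S
    obtain ⟨hC, hval⟩ := hrep
    set F := Finset.univ.biUnion ψ with hF
    set d : {S : Finset N // S ∈ C} → ℝ :=
      fun S => ∑ k ∈ F.filter (fun k => userSet ψ k = S.1), γ k with hd
    have hvd : v = ∑ S : {S : Finset N // S ∈ C}, d S • mmGame C S.1 := by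
      funext T
      rw [hval T]
      have h1 : T.1.biUnion ψ =
          F.filter (fun k => (userSet ψ k ∩ T.1).Nonempty) := by
        ext k
        simp only [Finset.mem_biUnion, Finset.mem_filter, hF, userSet,
          Finset.Nonempty, Finset.mem_inter, Finset.mem_univ, true_and]
        constructor
        · rintro ⟨n, hn, hk⟩
          exact ⟨⟨n, hk⟩, n, hk, hn⟩
        · rintro ⟨-, n, hk, hn⟩
          exact ⟨n, hn, hk⟩
      set g : K → {S : Finset N // S ∈ C} := fun k =>
        if h : userSet ψ k ∈ C then ⟨_, h⟩ else ⟨hCne.choose, hCne.choose_spec⟩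
        with hg
      have hgk : ∀ k ∈ F, ∀ S : {S : Finset N // S ∈ C},
          (g k = S ↔ userSet ψ k = S.1) := by
        intro k hk S
        have := hC k hk
        simp only [hg, dif_pos this, Subtype.ext_iff]
      have h2 : ∀ S : {S : Finset N // S ∈ C},
          F.filter (fun k => userSet ψ k = S.1) = F.filter (fun k => g k = S) := by
        intro S
        apply Finset.filter_congr
        intro k hk
        simp [hgk k hk S]
      calc ∑ k ∈ T.1.biUnion ψ, γ k
          = ∑ k ∈ F, γ k * (if (userSet ψ k ∩ T.1).Nonempty then 1 else 0) := by
            rw [h1, Finset.sum_filter]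
            exact Finset.sum_congr rfl fun k _ => by split <;> simp
        _ = ∑ S : {S : Finset N // S ∈ C},
              ∑ k ∈ F.filter (fun k => g k = S),
                γ k * (if (userSet ψ k ∩ T.1).Nonempty then 1 else 0) := by
            rw [Finset.sum_fiberwise_of_maps_to (fun k _ => Finset.mem_univ (g k))]
        _ = (∑ S : {S : Finset N // S ∈ C}, d S • mmGame C S.1) T := by
            rw [Finset.sum_apply]
            refine Finset.sum_congr rfl fun S _ => ?_
            rw [← h2 S]
            simp only [Pi.smul_apply, smul_eq_mul, mmGame, hd, Finset.sum_mul]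
            refine Finset.sum_congr rfl fun k hk => ?_
            rw [Finset.mem_filter] at hk
            rw [hk.2]
    have hsub : ∑ S : {S : Finset N // S ∈ C}, (c S - d S) • mmGame C S.1 = 0 := by
      have : ∑ S : {S : Finset N // S ∈ C}, (c S - d S) • mmGame C S.1 =
          (∑ S : {S : Finset N // S ∈ C}, c S • mmGame C S.1) -
          ∑ S : {S : Finset N // S ∈ C}, d S • mmGame C S.1 := by
        rw [← Finset.sum_sub_distrib]
        exact Finset.sum_congr rfl fun S _ => sub_smul _ _ _
      rw [this, ← hv, ← hvd, sub_self]
    have := Fintype.linearIndependent_iff.mp hli (fun S => c S - d S) hsub S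
    linarith [this]
  constructor
  · -- lower bound
    intro K ψ γ hrep
    set F := Finset.univ.biUnion ψ with hF
    have hk := key K ψ γ hrep
    rcases Finset.eq_empty_or_nonempty
      (Finset.univ.filter fun S : {S : Finset N // S ∈ C} => c S ≠ 0) with he | hne
    · rw [he]; simp
    · obtain ⟨S0, hS0⟩ := hne
      have hfib : ∀ S : {S : Finset N // S ∈ C}, c S ≠ 0 →
          (F.filter (fun k => userSet ψ k = S.1)).Nonempty := by
        intro S hS
        by_contra h
        rw [Finset.not_nonempty_iff_eq_empty] at h
        apply hS
        rw [hk S, h, Finset.sum_empty]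
      have hS0ne : c S0 ≠ 0 := (Finset.mem_filter.mp hS0).2
      obtain ⟨k0, hk0⟩ := hfib S0 hS0ne
      set f : {S : Finset N // S ∈ C} → K := fun S =>
        if h : (F.filter (fun k => userSet ψ k = S.1)).Nonempty then h.choose else k0
        with hf
      apply Finset.card_le_card_of_injOn f
      · intro S hS
        have h := hfib S (Finset.mem_filter.mp hS).2
        have := h.choose_spec
        rw [Finset.mem_filter] at this
        simp only [hf, dif_pos h]
        exact this.1
      · intro S1 hS1 S2 hS2 heq
        have hc1 : c S1 ≠ 0 := (Finset.mem_filter.mp (Finset.mem_coe.mp hS1)).2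
        have hc2 : c S2 ≠ 0 := (Finset.mem_filter.mp (Finset.mem_coe.mp hS2)).2
        have h1 := hfib S1 hc1
        have h2 := hfib S2 hc2
        have e1 := h1.choose_spec
        have e2 := h2.choose_spec
        rw [Finset.mem_filter] at e1 e2
        simp only [hf, dif_pos h1, dif_pos h2] at heq
        apply Subtype.ext
        rw [← e1.2, ← e2.2, heq]
  · -- existence of a minimal representation
    set ψ : N → Finset {S : Finset N // S ∈ C} :=
      fun n => Finset.univ.filter (fun S => c S ≠ 0 ∧ n ∈ S.1) with hψ
    have hus : ∀ S : {S : Finset N // S ∈ C}, c S ≠ 0 → userSet ψ S = S.1 := by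
      intro S hS
      ext n
      simp [userSet, hψ, hS]
    have hbiu : ∀ inst : DecidableEq {S : Finset N // S ∈ C},
        @Finset.biUnion N _ inst Finset.univ ψ =
        Finset.univ.filter (fun S : {S : Finset N // S ∈ C} => c S ≠ 0) := by
      intro inst
      ext S
      rw [Finset.mem_biUnion]
      simp only [hψ, Finset.mem_filter, Finset.mem_univ, true_and]
      constructor
      · rintro ⟨n, hc, -⟩; exact hc
      · intro h
        obtain ⟨n, hn⟩ := hmem S.1 S.2
        exact ⟨n, h, hn⟩
    have hrep : IsRep C v ψ (fun S => c S) := by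
      constructor
      · intro k hk
        rw [hbiu _, Finset.mem_filter] at hk
        rw [hus k hk.2]
        exact k.2
      · intro T
        have hbi : ∀ inst : DecidableEq {S : Finset N // S ∈ C},
            @Finset.biUnion N _ inst T.1 ψ =
            Finset.univ.filter (fun S : {S : Finset N // S ∈ C} =>
              c S ≠ 0 ∧ (S.1 ∩ T.1).Nonempty) := by
          intro inst
          ext S
          rw [Finset.mem_biUnion]
          simp only [hψ, Finset.mem_filter, Finset.mem_univ, true_and,
            Finset.Nonempty, Finset.mem_inter]
          tauto
        rw [hbi, hv, Finset.sum_apply, Finset.sum_filter]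
        refine Finset.sum_congr rfl fun S _ => ?_
        simp only [Pi.smul_apply, smul_eq_mul, mmGame]
        by_cases hc : c S = 0
        · simp [hc]
        · by_cases hn : (S.1 ∩ T.1).Nonempty <;> simp [hc, hn]
    refine ⟨{S : Finset N // S ∈ C}, ψ, fun S => c S, hrep, ?_⟩
    rw [hbiu]
end

section
/- Assume C has full span. Then the equitable solution is invariant across all representations of a game: if (ψ, γ) and (ψ', γ') are both representations of the same game v : C → ℝ, then τ(ψ, γ) = τ(ψ', γ') in ℝ^N. -/
open Finset
open scoped Classical

lemma rep_sum_eq {N K : Type} [Fintype N] [DecidableEq N] (C : Finset (Finset N))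
    (ψ : N → Finset K) (γ : K → ℝ)
    (hψC : ∀ k ∈ Finset.univ.biUnion ψ, userSet ψ k ∈ C)
    (T : {T : Finset N // T ∈ C}) :
    ∑ k ∈ T.1.biUnion ψ, γ k =
      ∑ S ∈ C, (∑ k ∈ (Finset.univ.biUnion ψ).filter
        (fun k => userSet ψ k = S), γ k) * mmGame C S T := by
  classical
  have hset : T.1.biUnion ψ = (Finset.univ.biUnion ψ).filter
      (fun k => (userSet ψ k ∩ T.1).Nonempty) := by
    ext k
    constructor
    · intro hk
      rcases Finset.mem_biUnion.mp hk with ⟨n, hn, hkn⟩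
      refine Finset.mem_filter.mpr ⟨Finset.mem_biUnion.mpr ⟨n, Finset.mem_univ n, hkn⟩,
        ⟨n, ?_⟩⟩
      simp [userSet, hkn, hn]
    · intro hk
      rcases Finset.mem_filter.mp hk with ⟨-, n, hn⟩
      simp only [userSet, Finset.mem_inter, Finset.mem_filter, Finset.mem_univ,
        true_and] at hn
      exact Finset.mem_biUnion.mpr ⟨n, hn.2, hn.1⟩
  rw [hset, Finset.sum_filter,
    ← Finset.sum_fiberwise_of_maps_to hψC
      (fun k => if (userSet ψ k ∩ T.1).Nonempty then γ k else 0)]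
  refine Finset.sum_congr rfl fun S hS => ?_
  have : ∀ k ∈ (Finset.univ.biUnion ψ).filter (fun k => userSet ψ k = S),
      (if (userSet ψ k ∩ T.1).Nonempty then γ k else 0)
        = γ k * mmGame C S T := by
    intro k hk
    have hkS : userSet ψ k = S := (Finset.mem_filter.mp hk).2
    rw [mmGame, hkS]
    by_cases hc : (S ∩ T.1).Nonempty <;> simp [hc]
  rw [Finset.sum_congr rfl this, ← Finset.sum_mul]

lemma tau_eq_coeff {N K : Type} [Fintype N] [DecidableEq N] (C : Finset (Finset N))
    (ψ : N → Finset K) (γ : K → ℝ)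
    (hψC : ∀ k ∈ Finset.univ.biUnion ψ, userSet ψ k ∈ C) (n : N) :
    tau ψ γ n = ∑ S ∈ C, (∑ k ∈ (Finset.univ.biUnion ψ).filter
        (fun k => userSet ψ k = S), γ k) *
      (if n ∈ S then (S.card : ℝ)⁻¹ else 0) := by
  classical
  have hset : ψ n = (Finset.univ.biUnion ψ).filter (fun k => n ∈ userSet ψ k) := by
    ext k
    simp [userSet, Finset.mem_biUnion]
    intro hk; exact ⟨n, hk⟩
  rw [tau, hset, Finset.sum_filter,
    ← Finset.sum_fiberwise_of_maps_to hψC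
      (fun k => if n ∈ userSet ψ k then γ k / ((userSet ψ k).card : ℝ) else 0)]
  refine Finset.sum_congr rfl fun S hS => ?_
  have : ∀ k ∈ (Finset.univ.biUnion ψ).filter (fun k => userSet ψ k = S),
      (if n ∈ userSet ψ k then γ k / ((userSet ψ k).card : ℝ) else 0)
        = γ k * (if n ∈ S then (S.card : ℝ)⁻¹ else 0) := by
    intro k hk
    have hkS : userSet ψ k = S := (Finset.mem_filter.mp hk).2
    rw [hkS]
    by_cases hc : n ∈ S <;> simp [hc, div_eq_mul_inv]
  rw [Finset.sum_congr rfl this, ← Finset.sum_mul]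

/-- If `C` has full span, the equitable solution is invariant
across all representations of a game `v : C → ℝ`. -/
theorem equitable_solution_invariant {N : Type} [Fintype N] [DecidableEq N]
    [Nonempty N] (C : Finset (Finset N)) (hCne : C.Nonempty)
    (hmem : ∀ S ∈ C, S.Nonempty) (hcover : ∀ n : N, ∃ S ∈ C, n ∈ S)
    (hfs : FullSpan C) (v : {T : Finset N // T ∈ C} → ℝ)
    {K K' : Type} (ψ : N → Finset K) (γ : K → ℝ)
    (ψ' : N → Finset K') (γ' : K' → ℝ)
    (h : IsRep C v ψ γ) (h' : IsRep C v ψ' γ') :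
    ∀ n : N, tau ψ γ n = tau ψ' γ' n := by
  classical
  obtain ⟨hψC, hψv⟩ := h
  obtain ⟨hψ'C, hψ'v⟩ := h'
  set d : Finset N → ℝ := fun S =>
    ∑ k ∈ (Finset.univ.biUnion ψ).filter (fun k => userSet ψ k = S), γ k with hd
  set d' : Finset N → ℝ := fun S =>
    ∑ k ∈ (Finset.univ.biUnion ψ').filter (fun k => userSet ψ' k = S), γ' k with hd'
  have hdd' : ∀ S ∈ C, d S = d' S := by
    have hsum : ∑ S : {S : Finset N // S ∈ C}, (d S.1 - d' S.1) • mmGame C S.1 = 0 := by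
      funext T
      rw [Finset.sum_apply]
      simp only [Pi.smul_apply, smul_eq_mul, Pi.zero_apply, sub_mul]
      rw [Finset.sum_sub_distrib]
      rw [Finset.univ_eq_attach]
      rw [Finset.sum_attach C (fun S => d S * mmGame C S T),
        Finset.sum_attach C (fun S => d' S * mmGame C S T)]
      rw [← rep_sum_eq C ψ γ hψC T, ← rep_sum_eq C ψ' γ' hψ'C T, ← hψv T, ← hψ'v T,
        sub_self]
    have := Fintype.linearIndependent_iff.mp hfs.1
      (fun S : {S : Finset N // S ∈ C} => d S.1 - d' S.1) hsum
    intro S hS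
    have h0 : d S - d' S = 0 := this ⟨S, hS⟩
    linarith
  intro n
  rw [tau_eq_coeff C ψ γ hψC n, tau_eq_coeff C ψ' γ' hψ'C n]
  refine Finset.sum_congr rfl fun S hS => ?_
  have heq := hdd' S hS
  simp only [hd, hd'] at heq
  rw [heq]
end

section
/- In the canonical case C = 𝒩 (all nonempty subsets of N), for every game v : 𝒩 → ℝ and every representation (ψ, γ) of v, the equitable solution equals the Shapley value: τ_n(ψ, γ) = φ_n(v) for every n ∈ N. -/
open Finset
open scoped Classical

noncomputable def gAux (m w : ℕ) : ℕ → ℝ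
  | 0 => 0
  | (i+1) => (m.factorial : ℝ) * ((w+i+1).factorial) /
      ((i.factorial) * ((m+w+1).factorial) * (w+1))

lemma key_sum (m w : ℕ) :
    ∑ i ∈ Finset.range (m+1),
      (m.factorial : ℝ) * ((w+i).factorial) / ((i.factorial) * ((m+w+1).factorial))
      = 1/(w+1) := by
  have hd : ((m+w+1).factorial : ℝ) ≠ 0 := by positivity
  have hw : ((w:ℝ)+1) ≠ 0 := by positivity
  have hterm : ∀ i, (m.factorial : ℝ) * ((w+i).factorial) / ((i.factorial) * ((m+w+1).factorial))
      = gAux m w (i+1) - gAux m w i := by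
    intro i
    cases i with
    | zero =>
      simp only [gAux]
      have h1 : ((w+0+1).factorial : ℝ) = ((w:ℝ)+1) * (w.factorial) := by
        push_cast [Nat.factorial_succ]; ring
      rw [h1]
      have h2 : ((w+0).factorial : ℝ) = (w.factorial : ℝ) := by norm_num
      rw [h2]
      have h3 : ((w.factorial : ℝ)) ≠ 0 := by positivity
      field_simp
      ring
    | succ i =>
      simp only [gAux]
      have h1 : ((w+(i+1)+1).factorial : ℝ) = ((w:ℝ)+i+2) * ((w+i+1).factorial) := by
        have : w+(i+1)+1 = (w+i+1)+1 := by ring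
        rw [this, Nat.factorial_succ]; push_cast; ring
      have h2 : ((w+(i+1)).factorial : ℝ) = ((w+i+1).factorial : ℝ) := by
        norm_num [Nat.add_assoc]
      have h3 : (((i+1)).factorial : ℝ) = ((i:ℝ)+1) * (i.factorial) := by
        push_cast [Nat.factorial_succ]; ring
      rw [h1, h2, h3]
      have h4 : ((i.factorial : ℝ)) ≠ 0 := by positivity
      have h5 : ((w+i+1).factorial : ℝ) ≠ 0 := by positivity
      have h6 : ((i:ℝ)+1) ≠ 0 := by positivity
      field_simp
      ring
  rw [Finset.sum_congr rfl (fun i _ => hterm i), Finset.sum_range_sub]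
  simp only [gAux]
  have h1 : w + m + 1 = m + w + 1 := by ring
  rw [h1]
  have h2 : ((m.factorial : ℝ)) ≠ 0 := by positivity
  field_simp
  ring

/-- Sum of the Shapley coefficients over all subsets of a set `D` of
cardinality `m = |N| - u`. -/
lemma coeff_sum {N : Type} [Fintype N] [DecidableEq N] (D : Finset N) (u : ℕ)
    (hu : 1 ≤ u) (hcard : D.card + u = Fintype.card N) :
    ∑ S ∈ D.powerset,
      ((S.card.factorial : ℝ) * ((Fintype.card N - 1 - S.card).factorial : ℝ) /
        ((Fintype.card N).factorial : ℝ)) = 1 / u := by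
  obtain ⟨w, rfl⟩ : ∃ w, u = w + 1 := ⟨u - 1, by omega⟩
  set m := D.card with hm
  have hN : Fintype.card N = m + w + 1 := by omega
  -- group by cardinality
  rw [Finset.sum_powerset]
  have hstep : ∀ j ∈ Finset.range (m+1),
      (∑ S ∈ D.powersetCard j,
        ((S.card.factorial : ℝ) * ((Fintype.card N - 1 - S.card).factorial : ℝ) /
          ((Fintype.card N).factorial : ℝ)))
      = (m.choose j : ℝ) * ((j.factorial : ℝ) * (((m + w - j).factorial : ℝ)) /
          (((m+w+1).factorial : ℝ))) := by
    intro j hj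
    have hj' : j ≤ m := by simpa using Nat.lt_succ_iff.mp (Finset.mem_range.mp hj)
    have hcardeq : ∀ S ∈ D.powersetCard j, S.card = j := fun S hS =>
      (Finset.mem_powersetCard.mp hS).2
    rw [Finset.sum_congr rfl (fun S hS => by
      rw [hcardeq S hS, hN, show m+w+1-1-j = m+w-j from by omega])]
    rw [Finset.sum_const, Finset.card_powersetCard, nsmul_eq_mul, ← hm]
  rw [← hm, Finset.sum_congr rfl hstep]
  -- reflect the sum
  have hrefl := Finset.sum_range_reflect
    (fun j => (m.choose j : ℝ) * ((j.factorial : ℝ) * (((m + w - j).factorial : ℝ)) /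
          (((m+w+1).factorial : ℝ)))) (m+1)
  rw [← hrefl]
  have hident : ∀ i ∈ Finset.range (m+1),
      ((m.choose (m + 1 - 1 - i) : ℝ) * (((m + 1 - 1 - i).factorial : ℝ) *
        (((m + w - (m + 1 - 1 - i)).factorial : ℝ)) / (((m+w+1).factorial : ℝ))))
      = (m.factorial : ℝ) * ((w+i).factorial) / ((i.factorial) * ((m+w+1).factorial)) := by
    intro i hi
    have hi' : i ≤ m := by simpa using Nat.lt_succ_iff.mp (Finset.mem_range.mp hi)
    have e1 : m + 1 - 1 - i = m - i := by omega
    have e2 : m + w - (m - i) = w + i := by omega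
    rw [e1, e2]
    have e3 : m.choose (m - i) = m.choose i := Nat.choose_symm hi'
    rw [e3]
    have e4 : (m.choose i : ℝ) * ((m-i).factorial : ℝ) * (i.factorial : ℝ)
        = (m.factorial : ℝ) := by
      rw_mod_cast [mul_right_comm, Nat.choose_mul_factorial_mul_factorial hi']
    have h4 : ((i.factorial : ℝ)) ≠ 0 := by positivity
    have h5 : (((m+w+1).factorial : ℝ)) ≠ 0 := by positivity
    field_simp
    linear_combination e4
  rw [Finset.sum_congr rfl hident, key_sum]
  push_cast
  ring


/-- In the canonical case `C = 𝒩` (all nonempty subsets of `N`),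
for every game `v : 𝒩 → ℝ` (with the convention `v ∅ = 0`) and every
representation `(ψ, γ)` of `v`, the equitable solution equals the Shapley
value: `τ_n(ψ, γ) = φ_n(v)` for every `n ∈ N`. -/
theorem equitable_eq_shapley {N : Type} [Fintype N] [DecidableEq N]
    [Nonempty N] (v : Finset N → ℝ) (hv0 : v ∅ = 0)
    {K : Type} (ψ : N → Finset K) (γ : K → ℝ)
    (hrep : ∀ S : Finset N, S.Nonempty → v S = ∑ k ∈ S.biUnion ψ, γ k) :
    ∀ n : N, tau ψ γ n = shapley v n := by
  intro n
  have hvS : ∀ S : Finset N, v S = ∑ k ∈ S.biUnion ψ, γ k := by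
    intro S
    rcases S.eq_empty_or_nonempty with h|h
    · simp [h, hv0]
    · exact hrep S h
  have hdiff : ∀ S : Finset N,
      v (insert n S) - v S = ∑ k ∈ ψ n, (if k ∈ S.biUnion ψ then 0 else γ k) := by
    intro S
    rw [hvS, hvS, Finset.biUnion_insert,
      ← Finset.sum_sdiff (Finset.subset_union_right), add_sub_cancel_right,
      Finset.union_sdiff_right, Finset.sdiff_eq_filter, Finset.sum_filter]
    exact Finset.sum_congr rfl fun k _ => by split_ifs with h <;> simp [h]
  unfold shapley
  rw [Finset.sum_congr rfl (fun S _ => by rw [hdiff S])]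
  simp_rw [Finset.mul_sum]
  rw [Finset.sum_comm]
  unfold tau
  refine Finset.sum_congr rfl fun k hk => ?_
  -- inner sum over S
  have hn : n ∈ userSet ψ k := by simp [userSet, hk]
  have hsplit : ∀ S ∈ (Finset.univ.erase n).powerset,
      ((S.card.factorial : ℝ) * ((Fintype.card N - 1 - S.card).factorial : ℝ) /
        ((Fintype.card N).factorial : ℝ)) * (if k ∈ S.biUnion ψ then 0 else γ k)
      = (if S ∈ (Finset.univ.erase n \ userSet ψ k).powerset then
          ((S.card.factorial : ℝ) * ((Fintype.card N - 1 - S.card).factorial : ℝ) /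
            ((Fintype.card N).factorial : ℝ)) * γ k else 0) := by
    intro S hS
    have hSsub : S ⊆ Finset.univ.erase n := Finset.mem_powerset.mp hS
    have hiff : k ∈ S.biUnion ψ ↔ ¬ (S ∈ (Finset.univ.erase n \ userSet ψ k).powerset) := by
      simp only [Finset.mem_powerset, Finset.mem_biUnion, Finset.subset_iff,
        Finset.mem_sdiff, userSet, Finset.mem_filter, Finset.mem_univ, true_and]
      constructor
      · rintro ⟨s, hs, hks⟩ h
        exact (h hs).2 hks
      · intro h
        push_neg at h
        obtain ⟨s, hs, h2⟩ := h
        exact ⟨s, hs, by tauto⟩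
    by_cases h : k ∈ S.biUnion ψ
    · rw [if_pos h, if_neg (by tauto), mul_zero]
    · rw [if_neg h, if_pos (by tauto)]
  rw [Finset.sum_congr rfl hsplit, ← Finset.sum_filter]
  have hfil : (Finset.univ.erase n).powerset.filter
      (fun S => S ∈ (Finset.univ.erase n \ userSet ψ k).powerset)
      = (Finset.univ.erase n \ userSet ψ k).powerset := by
    ext S
    simp only [Finset.mem_filter, Finset.mem_powerset, and_iff_right_iff_imp]
    intro h
    exact h.trans (Finset.sdiff_subset)
  rw [hfil, ← Finset.sum_mul]
  have hu : 1 ≤ (userSet ψ k).card := Finset.card_pos.mpr ⟨n, hn⟩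
  have hD : (Finset.univ.erase n \ userSet ψ k).card + (userSet ψ k).card
      = Fintype.card N := by
    have : Finset.univ.erase n \ userSet ψ k = Finset.univ \ userSet ψ k := by
      ext x
      simp only [Finset.mem_sdiff, Finset.mem_erase, Finset.mem_univ, true_and, and_true]
      constructor
      · tauto
      · intro hx; exact ⟨fun he => hx (he ▸ hn), hx⟩
    rw [this, Finset.card_sdiff_of_subset (Finset.subset_univ _), Finset.card_univ]
    have h9 : (userSet ψ k).card ≤ Fintype.card N := Finset.card_le_univ _
    omega
  rw [coeff_sum _ _ hu hD]
  rw [one_div, inv_mul_eq_div]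
end

section
/- Let S be a nonempty subset of the finite set N and c ∈ ℝ, and let c·w̃_S : 𝒩 → ℝ be the game given by (c·w̃_S)(T) = c if S ∩ T ≠ ∅ and 0 if S ∩ T = ∅. Then the Shapley value of c·w̃_S gives φ_n(c·w̃_S) = c/|S| for every n ∈ S and φ_n(c·w̃_S) = 0 for every n ∈ N∖S. -/
open Finset
open scoped Classical

lemma shapley_key (m s : ℕ) (hs : 0 < s) :
    ∑ j ∈ Finset.range (m+1),
      (m.choose j : ℝ) * (j.factorial : ℝ) * ((m + s - 1 - j).factorial : ℝ)
        / ((m + s).factorial : ℝ) = 1 / (s : ℝ) := by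
  have hfpos : ∀ k : ℕ, (0:ℝ) < (k.factorial : ℝ) := fun k => by
    exact_mod_cast k.factorial_pos
  set f : ℕ → ℝ := fun j => (m.factorial : ℝ) * ((m + s - j).factorial : ℝ) /
    ((s : ℝ) * ((m+s).factorial : ℝ) * ((m - j).factorial : ℝ)) with hf
  have hterm : ∀ j, j ≤ m →
      (m.choose j : ℝ) * (j.factorial : ℝ) * ((m + s - 1 - j).factorial : ℝ)
        / ((m + s).factorial : ℝ)
      = (m.factorial : ℝ) * ((m + s - 1 - j).factorial : ℝ) /
        (((m+s).factorial : ℝ) * ((m - j).factorial : ℝ)) := by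
    intro j hj
    have hch : (m.choose j : ℝ) * (j.factorial : ℝ) * ((m-j).factorial : ℝ)
        = (m.factorial : ℝ) := by
      exact_mod_cast congrArg (Nat.cast : ℕ → ℝ)
        (Nat.choose_mul_factorial_mul_factorial hj)
    rw [div_eq_div_iff (by positivity) (by positivity)]
    linear_combination (((m+s-1-j).factorial : ℝ) * ((m+s).factorial : ℝ)) * hch
  have hsub : ∀ j, j < m →
      (m.choose j : ℝ) * (j.factorial : ℝ) * ((m + s - 1 - j).factorial : ℝ)
        / ((m + s).factorial : ℝ) = f j - f (j+1) := by
    intro j hj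
    rw [hterm j hj.le]
    have e1 : m + s - (j+1) = m + s - 1 - j := by omega
    have e2 : m - (j+1) = m - 1 - j := by omega
    have e3 : m + s - j = (m + s - 1 - j) + 1 := by omega
    have e4 : m - j = (m - 1 - j) + 1 := by omega
    simp only [hf, e1, e2, e3, e4, Nat.factorial_succ]
    have c3 : ((m + s - 1 - j : ℕ) : ℝ) = (m:ℝ) + (s:ℝ) - 1 - (j:ℝ) := by
      rw [Nat.cast_sub (by omega), Nat.cast_sub (by omega)]; push_cast; ring
    have c4 : ((m - 1 - j : ℕ) : ℝ) = (m:ℝ) - 1 - (j:ℝ) := by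
      rw [Nat.cast_sub (by omega), Nat.cast_sub (by omega)]; push_cast; ring
    have h1 := hfpos (m+s-1-j)
    have h2 := hfpos (m-1-j)
    have h3 := hfpos (m+s)
    have hs' : (0:ℝ) < s := by exact_mod_cast hs
    push_cast
    rw [c3, c4]
    have hm : (0:ℝ) < (m:ℝ) - 1 - (j:ℝ) + 1 := by
      have : (j:ℝ) < m := by exact_mod_cast hj
      linarith
    have hms : (0:ℝ) < (m:ℝ) + (s:ℝ) - 1 - (j:ℝ) + 1 := by linarith
    field_simp
    ring
  rw [Finset.sum_range_succ]
  have htel : ∑ j ∈ Finset.range m,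
      (m.choose j : ℝ) * (j.factorial : ℝ) * ((m + s - 1 - j).factorial : ℝ)
        / ((m + s).factorial : ℝ) = f 0 - f m := by
    rw [← Finset.sum_range_sub' f m]
    exact Finset.sum_congr rfl fun j hj => hsub j (Finset.mem_range.mp hj)
  rw [htel]
  have e5 : m + s - 1 - m = s - 1 := by omega
  have e6 : m + s - m = s := by omega
  have e7 : m - m = 0 := by omega
  have e8 : m + s - 0 = m + s := rfl
  have e9 : m - 0 = 0 + m := by omega
  simp only [hf, e5, e6, e7, Nat.sub_zero, Nat.choose_self, Nat.cast_one,
    Nat.factorial_zero, Nat.sub_self]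
  have hsf : ((s : ℕ).factorial : ℝ) = (s:ℝ) * ((s-1).factorial : ℝ) := by
    have : s = (s-1)+1 := by omega
    rw [this]; push_cast [Nat.factorial_succ]; ring_nf
  rw [hsf]
  have h3 := hfpos (m+s)
  have h4 := hfpos m
  have h5 := hfpos (s-1)
  have hs' : (0:ℝ) < s := by exact_mod_cast hs
  field_simp
  ring

/-- For a nonempty `S ⊆ N` and `c ∈ ℝ`, the Shapley value of the
game `c·w̃_S` (worth `c` to coalitions meeting `S` and `0` to coalitions
missing `S`) gives `c/|S|` to every `n ∈ S` and `0` to every `n ∈ N∖S`. -/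
theorem shapley_of_mmGame {N : Type} [Fintype N] [DecidableEq N] [Nonempty N]
    (S : Finset N) (hS : S.Nonempty) (c : ℝ) :
    (∀ n ∈ S,
      shapley (fun T : Finset N => if (S ∩ T).Nonempty then c else 0) n
        = c / (S.card : ℝ)) ∧
    (∀ n ∈ Finset.univ \ S,
      shapley (fun T : Finset N => if (S ∩ T).Nonempty then c else 0) n
        = 0) := by
  set v : Finset N → ℝ := fun T => if (S ∩ T).Nonempty then c else 0 with hv
  constructor
  · intro n hn
    unfold shapley
    set m := (Finset.univ \ S).card with hm
    have hcard : Fintype.card N = m + S.card := by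
      rw [hm, Finset.card_sdiff_of_subset (Finset.subset_univ S)]
      have := Finset.card_le_univ S
      simp [Finset.card_univ]
      omega
    have hrw : ∀ T ∈ (Finset.univ.erase n).powerset,
        ((T.card.factorial : ℝ) * ((Fintype.card N - 1 - T.card).factorial : ℝ) /
          ((Fintype.card N).factorial : ℝ)) * (v (insert n T) - v T)
        = if T ⊆ Finset.univ \ S then
            ((T.card.factorial : ℝ) * ((Fintype.card N - 1 - T.card).factorial : ℝ) /
              ((Fintype.card N).factorial : ℝ)) * c else 0 := by
      intro T hT
      have hvin : v (insert n T) = c := by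
        have hne : (S ∩ insert n T).Nonempty :=
          ⟨n, Finset.mem_inter.mpr ⟨hn, Finset.mem_insert_self n T⟩⟩
        rw [hv]
        simp only [if_pos hne]
      by_cases hsub : T ⊆ Finset.univ \ S
      · rw [if_pos hsub, hvin]
        have : ¬ (S ∩ T).Nonempty := by
          rintro ⟨x, hx⟩
          rw [Finset.mem_inter] at hx
          exact (Finset.mem_sdiff.mp (hsub hx.2)).2 hx.1
        rw [hv]; simp only [if_neg this]; ring
      · rw [if_neg hsub, hvin]
        have : (S ∩ T).Nonempty := by
          rw [Finset.not_subset] at hsub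
          obtain ⟨x, hxT, hx⟩ := hsub
          refine ⟨x, Finset.mem_inter.mpr ⟨?_, hxT⟩⟩
          by_contra hxS
          exact hx (Finset.mem_sdiff.mpr ⟨Finset.mem_univ x, hxS⟩)
        rw [hv]; simp only [if_pos this]; ring
    rw [Finset.sum_congr rfl hrw]
    have hps : (Finset.univ \ S).powerset ⊆ (Finset.univ.erase n).powerset := by
      apply Finset.powerset_mono.mpr
      intro x hx
      rw [Finset.mem_sdiff] at hx
      exact Finset.mem_erase.mpr ⟨fun h => hx.2 (h ▸ hn), Finset.mem_univ x⟩
    rw [← Finset.sum_subset hps (fun T _ hT => by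
      rw [if_neg (fun h => hT (Finset.mem_powerset.mpr h))])]
    have h2 : ∀ T ∈ (Finset.univ \ S).powerset,
        (if T ⊆ Finset.univ \ S then
            ((T.card.factorial : ℝ) * ((Fintype.card N - 1 - T.card).factorial : ℝ) /
              ((Fintype.card N).factorial : ℝ)) * c else 0)
        = ((T.card.factorial : ℝ) * ((Fintype.card N - 1 - T.card).factorial : ℝ) /
              ((Fintype.card N).factorial : ℝ)) * c := fun T hT =>
      if_pos (Finset.mem_powerset.mp hT)
    rw [Finset.sum_congr rfl h2]
    rw [Finset.sum_powerset (univ \ S)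
      (f := fun T => ((T.card.factorial : ℝ) *
        ((Fintype.card N - 1 - T.card).factorial : ℝ) /
        ((Fintype.card N).factorial : ℝ)) * c)]
    have h3 : ∀ j ∈ Finset.range (m+1),
        (∑ T ∈ (Finset.univ \ S).powersetCard j,
          ((T.card.factorial : ℝ) * ((Fintype.card N - 1 - T.card).factorial : ℝ) /
            ((Fintype.card N).factorial : ℝ)) * c)
        = (m.choose j : ℝ) * ((j.factorial : ℝ) *
            ((m + S.card - 1 - j).factorial : ℝ) /
            (((m + S.card).factorial : ℝ))) * c := by
      intro j hj
      have : ∀ T ∈ (Finset.univ \ S).powersetCard j,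
          ((T.card.factorial : ℝ) * ((Fintype.card N - 1 - T.card).factorial : ℝ) /
            ((Fintype.card N).factorial : ℝ)) * c
          = ((j.factorial : ℝ) * ((m + S.card - 1 - j).factorial : ℝ) /
            (((m + S.card).factorial : ℝ))) * c := by
        intro T hT
        rw [(Finset.mem_powersetCard.mp hT).2, hcard]
      rw [Finset.sum_congr rfl this, Finset.sum_const, Finset.card_powersetCard,
        ← hm, nsmul_eq_mul]
      ring
    rw [← hm]
    rw [Finset.sum_congr rfl h3]
    have hkey := shapley_key m S.card (Finset.card_pos.mpr hS)
    have : ∑ j ∈ Finset.range (m+1),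
        (m.choose j : ℝ) * ((j.factorial : ℝ) * ((m + S.card - 1 - j).factorial : ℝ) /
          (((m + S.card).factorial : ℝ))) * c
        = (∑ j ∈ Finset.range (m+1),
          (m.choose j : ℝ) * (j.factorial : ℝ) * ((m + S.card - 1 - j).factorial : ℝ)
            / ((m + S.card).factorial : ℝ)) * c := by
      rw [Finset.sum_mul]
      exact Finset.sum_congr rfl fun j _ => by ring
    rw [this, hkey]
    ring
  · intro n hn
    rw [Finset.mem_sdiff] at hn
    unfold shapley
    apply Finset.sum_eq_zero
    intro T hT
    have : S ∩ insert n T = S ∩ T := by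
      ext x
      simp only [Finset.mem_inter, Finset.mem_insert]
      constructor
      · rintro ⟨hxS, hx | hx⟩
        · exact absurd (hx ▸ hxS) hn.2
        · exact ⟨hxS, hx⟩
      · rintro ⟨hxS, hx⟩; exact ⟨hxS, Or.inr hx⟩
    rw [hv]
    simp only [this, sub_self, mul_zero]
end

section
/- A game v : C → ℝ has a representation if and only if v lies in Sp(C) = Span{w_S : S ∈ C} ⊆ ℝ^C. -/
open Finset
open scoped Classical

/-- A game `v : C → ℝ` has a representation if and only if `v`
lies in `Sp(C) = Span{w_S : S ∈ C} ⊆ ℝ^C`. -/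
theorem hasRep_iff_mem_span {N : Type} [Fintype N] [DecidableEq N] [Nonempty N]
    (C : Finset (Finset N)) (hCne : C.Nonempty)
    (hmem : ∀ S ∈ C, S.Nonempty) (hcover : ∀ n : N, ∃ S ∈ C, n ∈ S)
    (v : {T : Finset N // T ∈ C} → ℝ) :
    (∃ (K : Type) (ψ : N → Finset K) (γ : K → ℝ), IsRep C v ψ γ) ↔
      v ∈ Submodule.span ℝ
        (Set.range fun S : {S : Finset N // S ∈ C} => mmGame C S.1) := by
  constructor
  · rintro ⟨K, ψ, γ, hrep, hval⟩
    have hv : v = ∑ k ∈ Finset.univ.biUnion ψ, γ k • mmGame C (userSet ψ k) := by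
      funext T
      rw [hval T]
      simp only [Finset.sum_apply, Pi.smul_apply, mmGame, smul_eq_mul, mul_ite,
        mul_one, mul_zero]
      rw [← Finset.sum_filter]
      refine Finset.sum_congr ?_ (fun _ _ => rfl)
      refine Finset.ext fun k => ?_
      rw [Finset.mem_filter]
      simp only [Finset.mem_filter, Finset.mem_biUnion, Finset.mem_univ, true_and,
        userSet]
      constructor
      · rintro ⟨n, hn, hk⟩
        exact ⟨⟨n, hk⟩, ⟨n, Finset.mem_inter.mpr ⟨by simp [hk], hn⟩⟩⟩
      · rintro ⟨-, n, hn⟩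
        rw [Finset.mem_inter, Finset.mem_filter] at hn
        exact ⟨n, hn.2, hn.1.2⟩
    rw [hv]
    refine Submodule.sum_mem _ (fun k hk => Submodule.smul_mem _ _ ?_)
    exact Submodule.subset_span ⟨⟨userSet ψ k, hrep k hk⟩, rfl⟩
  · intro hv
    rw [Submodule.mem_span_range_iff_exists_fun] at hv
    obtain ⟨c, hc⟩ := hv
    refine ⟨{S : Finset N // S ∈ C}, fun n => Finset.univ.filter (fun S => n ∈ S.1),
      c, ?_, ?_⟩
    · intro k _
      have : userSet (fun n => Finset.univ.filter (fun S : {S : Finset N // S ∈ C} => n ∈ S.1)) k = k.1 := by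
        ext n; simp [userSet]
      rw [this]; exact k.2
    · intro T
      rw [← hc]
      simp only [Finset.sum_apply, Pi.smul_apply, mmGame, smul_eq_mul, mul_ite,
        mul_one, mul_zero]
      rw [← Finset.sum_filter]
      congr 1
      ext k
      simp only [Finset.mem_filter, Finset.mem_biUnion, Finset.mem_univ, true_and,
        Finset.Nonempty, Finset.mem_inter]
      aesop
end

section
/- Every game v : C → ℝ has a representation if and only if C has full span (i.e., the family {w_S}_{S∈C} is a basis of ℝ^C). -/
open Finset
open scoped Classical

/-- Every game `v : C → ℝ` has a representation if and only if
`C` has full span. -/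
theorem allGamesRep_iff_fullSpan {N : Type} [Fintype N] [DecidableEq N]
    [Nonempty N] (C : Finset (Finset N)) (hCne : C.Nonempty)
    (hmem : ∀ S ∈ C, S.Nonempty) (hcover : ∀ n : N, ∃ S ∈ C, n ∈ S) :
    (∀ v : {T : Finset N // T ∈ C} → ℝ,
      ∃ (K : Type) (ψ : N → Finset K) (γ : K → ℝ), IsRep C v ψ γ) ↔
    FullSpan C := by
  classical
  constructor
  · intro hrep
    have hspan : Submodule.span ℝ
        (Set.range fun S : {S : Finset N // S ∈ C} => mmGame C S.1) = ⊤ := by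
      rw [Submodule.eq_top_iff']
      intro v
      obtain ⟨K, ψ, γ, h1, h2⟩ := hrep v
      have hv : v = ∑ k ∈ Finset.univ.biUnion ψ, γ k • mmGame C (userSet ψ k) := by
        funext T
        rw [h2 T]
        simp only [Finset.sum_apply, Pi.smul_apply, mmGame, smul_eq_mul, mul_ite,
          mul_one, mul_zero]
        rw [← Finset.sum_filter]
        apply Finset.sum_congr _ (fun _ _ => rfl)
        ext k
        simp only [Finset.mem_biUnion, Finset.mem_filter, Finset.mem_univ, true_and,
          Finset.Nonempty, Finset.mem_inter, userSet]
        tauto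
      rw [hv]
      exact Submodule.sum_mem _ fun k hk => Submodule.smul_mem _ _
        (Submodule.subset_span ⟨⟨userSet ψ k, h1 k hk⟩, rfl⟩)
    refine ⟨?_, hspan⟩
    apply linearIndependent_of_top_le_span_of_card_eq_finrank (le_of_eq hspan.symm)
    simp [Module.finrank_fintype_fun_eq_card]
  · rintro ⟨-, hspan⟩ v
    have hv : v ∈ Submodule.span ℝ
        (Set.range fun S : {S : Finset N // S ∈ C} => mmGame C S.1) := by
      rw [hspan]; exact Submodule.mem_top
    rw [Submodule.mem_span_range_iff_exists_fun] at hv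
    obtain ⟨c, hc⟩ := hv
    set ψ : N → Finset {S : Finset N // S ∈ C} :=
      fun n => Finset.univ.filter (fun S => n ∈ S.1) with hψ
    have huser : ∀ k : {S : Finset N // S ∈ C}, userSet ψ k = k.1 := by
      intro k; ext n; simp [userSet, hψ]
    refine ⟨{S : Finset N // S ∈ C}, ψ, c, fun k _ => ?_, fun T => ?_⟩
    · rw [huser k]; exact k.2
    · rw [← hc]
      simp only [Finset.sum_apply, Pi.smul_apply, mmGame, smul_eq_mul, mul_ite,
        mul_one, mul_zero]
      rw [← Finset.sum_filter]
      apply Finset.sum_congr _ (fun _ _ => rfl)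
      ext S
      simp only [Finset.mem_biUnion, Finset.mem_filter, Finset.mem_univ, true_and,
        Finset.Nonempty, Finset.mem_inter, hψ]
      tauto
end

section
/- Assume C has full span and let χ : ℝ^C → ℝ^N be the equitable solution, i.e., χ(v) = τ(ψ, γ) for any representation (ψ, γ) of v (this is well-defined by the invariance of the equitable solution across representations). If players i and j are symmetric in the game v : C → ℝ, then χ_i(v) = χ_j(v). -/
open Finset
open scoped Classical

/-- If `C` has full span and players `i, j` are symmetric in the
game `v : C → ℝ`, then the equitable solution `χ(v)` (the common value of
`τ(ψ, γ)` across representations `(ψ, γ)` of `v`) satisfies `χ_i(v) = χ_j(v)`. -/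
theorem equitable_symmetry {N : Type} [Fintype N] [DecidableEq N] [Nonempty N]
    (C : Finset (Finset N)) (hCne : C.Nonempty)
    (hmem : ∀ S ∈ C, S.Nonempty) (hcover : ∀ n : N, ∃ S ∈ C, n ∈ S)
    (hfs : FullSpan C) (v : {T : Finset N // T ∈ C} → ℝ)
    (i j : N) (hsym : SymmetricPlayers C v i j)
    {K : Type} (ψ : N → Finset K) (γ : K → ℝ) (hrep : IsRep C v ψ γ) :
    tau ψ γ i = tau ψ γ j := by
  classical
  set e := Equiv.swap i j with he
  have hee : ∀ x, e (e x) = x := fun x => Equiv.swap_apply_self i j x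
  have hmemimg : ∀ (S : Finset N) (x : N), x ∈ S.image e ↔ e x ∈ S := by
    intro S x
    constructor
    · rintro h
      obtain ⟨y, hy, hxy⟩ := Finset.mem_image.1 h
      rw [← hxy, hee]; exact hy
    · intro h
      exact Finset.mem_image.2 ⟨e x, h, hee x⟩
  have himg2 : ∀ S : Finset N, (S.image e).image e = S := by
    intro S; ext x
    rw [hmemimg, hmemimg, hee]
  have hcard : ∀ S : Finset N, (S.image e).card = S.card :=
    fun S => Finset.card_image_of_injective S e.injective
  have hfix : ∀ S : Finset N, i ∉ S → j ∉ S → S.image e = S := by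
    intro S hi hj
    have h1 : ∀ x ∈ S, e x = x := fun x hx =>
      Equiv.swap_apply_of_ne_of_ne (fun h => hi (h ▸ hx)) (fun h => hj (h ▸ hx))
    calc S.image e = S.image id := Finset.image_congr (fun x hx => h1 x hx)
    _ = S := Finset.image_id
  have hkey : ∀ S (hS : S ∈ C), ∃ hS' : S.image e ∈ C,
      v ⟨S.image e, hS'⟩ = v ⟨S, hS⟩ := by
    intro S hS
    by_cases hiS : i ∈ S <;> by_cases hjS : j ∈ S
    · have hmaps : ∀ x ∈ S, e x ∈ S := by
        intro x hx
        rcases eq_or_ne x i with rfl | hxi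
        · rwa [he, Equiv.swap_apply_left]
        rcases eq_or_ne x j with rfl | hxj
        · rwa [he, Equiv.swap_apply_right]
        · rwa [he, Equiv.swap_apply_of_ne_of_ne hxi hxj]
      have hsub : S.image e ⊆ S := by
        intro x hx
        have := hmaps _ ((hmemimg S x).1 hx)
        rwa [hee] at this
      have him : S.image e = S :=
        Finset.eq_of_subset_of_card_le hsub (hcard S).ge
      exact ⟨by rw [him]; exact hS, congrArg v (Subtype.ext him)⟩
    · -- i ∈ S, j ∉ S
      have hT0i : i ∉ S.erase i := Finset.notMem_erase i S
      have hT0j : j ∉ S.erase i := fun h => hjS (Finset.mem_of_mem_erase h)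
      have hins : insert i (S.erase i) = S := Finset.insert_erase hiS
      have him : S.image e = insert j (S.erase i) := by
        conv_lhs => rw [← hins]
        rw [Finset.image_insert, hfix _ hT0i hT0j, he, Equiv.swap_apply_left]
      obtain ⟨hiff, hval⟩ := hsym (S.erase i) hT0i hT0j
      have h1 : insert i (S.erase i) ∈ C := by rw [hins]; exact hS
      have h2 : insert j (S.erase i) ∈ C := hiff.1 h1
      refine ⟨by rw [him]; exact h2, ?_⟩
      calc v ⟨S.image e, _⟩ = v ⟨insert j (S.erase i), h2⟩ :=
            congrArg v (Subtype.ext him)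
        _ = v ⟨insert i (S.erase i), h1⟩ := (hval h1 h2).symm
        _ = v ⟨S, hS⟩ := congrArg v (Subtype.ext hins)
    · -- j ∈ S, i ∉ S
      have hT0j : j ∉ S.erase j := Finset.notMem_erase j S
      have hT0i : i ∉ S.erase j := fun h => hiS (Finset.mem_of_mem_erase h)
      have hins : insert j (S.erase j) = S := Finset.insert_erase hjS
      have him : S.image e = insert i (S.erase j) := by
        conv_lhs => rw [← hins]
        rw [Finset.image_insert, hfix _ hT0i hT0j, he, Equiv.swap_apply_right]
      obtain ⟨hiff, hval⟩ := hsym (S.erase j) hT0i hT0j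
      have h2 : insert j (S.erase j) ∈ C := by rw [hins]; exact hS
      have h1 : insert i (S.erase j) ∈ C := hiff.2 h2
      refine ⟨by rw [him]; exact h1, ?_⟩
      calc v ⟨S.image e, _⟩ = v ⟨insert i (S.erase j), h1⟩ :=
            congrArg v (Subtype.ext him)
        _ = v ⟨insert j (S.erase j), h2⟩ := hval h1 h2
        _ = v ⟨S, hS⟩ := congrArg v (Subtype.ext hins)
    · have him : S.image e = S := hfix S hiS hjS
      exact ⟨by rw [him]; exact hS, congrArg v (Subtype.ext him)⟩
  have hσC : ∀ S ∈ C, S.image e ∈ C := fun S hS => (hkey S hS).choose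
  have hσv : ∀ (S) (hS : S ∈ C) (hS' : S.image e ∈ C),
      v ⟨S.image e, hS'⟩ = v ⟨S, hS⟩ := fun S hS hS' => (hkey S hS).choose_spec
  set K' := Finset.univ.biUnion ψ with hK'
  set a : Finset N → ℝ :=
    fun S => ∑ k ∈ K'.filter (fun k => userSet ψ k = S), γ k with ha
  have huser : ∀ (k : K) (n : N), n ∈ userSet ψ k ↔ k ∈ ψ n := by
    intro k n; simp [userSet]
  have hrepA : ∀ T : {T : Finset N // T ∈ C},
      v T = ∑ S ∈ C.attach, (if (S.1 ∩ T.1).Nonempty then a S.1 else 0) := by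
    intro T
    have hset : T.1.biUnion ψ
        = K'.filter (fun k => (userSet ψ k ∩ T.1).Nonempty) := by
      ext k
      simp only [Finset.mem_biUnion, Finset.mem_filter, hK', Finset.mem_univ,
        true_and, Finset.Nonempty, Finset.mem_inter, huser]
      constructor
      · rintro ⟨n, hn, hkn⟩; exact ⟨⟨n, hkn⟩, n, hkn, hn⟩
      · rintro ⟨_, n, hkn, hn⟩; exact ⟨n, hn, hkn⟩
    calc v T = ∑ k ∈ T.1.biUnion ψ, γ k := hrep.2 T
      _ = ∑ k ∈ K', (if (userSet ψ k ∩ T.1).Nonempty then γ k else 0) := by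
          rw [hset, Finset.sum_filter]
      _ = ∑ S ∈ C, ∑ k ∈ K'.filter (fun k => userSet ψ k = S),
            (if (userSet ψ k ∩ T.1).Nonempty then γ k else 0) :=
          (Finset.sum_fiberwise_of_maps_to hrep.1 _).symm
      _ = ∑ S ∈ C, (if (S ∩ T.1).Nonempty then a S else 0) := by
          refine Finset.sum_congr rfl fun S hS => ?_
          have hc : ∀ k ∈ K'.filter (fun k => userSet ψ k = S),
              (if (userSet ψ k ∩ T.1).Nonempty then γ k else 0)
              = (if (S ∩ T.1).Nonempty then γ k else 0) := by
            intro k hk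
            rw [(Finset.mem_filter.1 hk).2]
          rw [Finset.sum_congr rfl hc]
          split_ifs
          · rfl
          · exact Finset.sum_const_zero
      _ = ∑ S ∈ C.attach, (if (S.1 ∩ T.1).Nonempty then a S.1 else 0) :=
          (Finset.sum_attach C _).symm
  have hne2 : ∀ S T : Finset N,
      ((S.image e) ∩ T).Nonempty ↔ (S ∩ T.image e).Nonempty := by
    intro S T
    conv_lhs => rw [← himg2 T]
    rw [← Finset.image_inter _ _ e.injective, Finset.image_nonempty]
  have hrepA' : ∀ T : {T : Finset N // T ∈ C},
      v T = ∑ S ∈ C.attach,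
        (if (S.1 ∩ T.1).Nonempty then a (S.1.image e) else 0) := by
    intro T
    have hT' : T.1.image e ∈ C := hσC T.1 T.2
    have h1 : v T = ∑ S ∈ C.attach,
        (if (S.1 ∩ T.1.image e).Nonempty then a S.1 else 0) := by
      rw [← hσv T.1 T.2 hT']; exact hrepA ⟨T.1.image e, hT'⟩
    rw [h1]
    refine Finset.sum_nbij'
      (i := fun S : {S : Finset N // S ∈ C} => (⟨S.1.image e, hσC S.1 S.2⟩ : {S : Finset N // S ∈ C}))
      (j := fun S : {S : Finset N // S ∈ C} => (⟨S.1.image e, hσC S.1 S.2⟩ : {S : Finset N // S ∈ C}))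
      (fun S _ => Finset.mem_attach _ _) (fun S _ => Finset.mem_attach _ _)
      (fun S _ => Subtype.ext (himg2 S.1)) (fun S _ => Subtype.ext (himg2 S.1))
      (fun S _ => ?_)
    simp only [himg2, hne2]
  have haeq : ∀ S : Finset N, S ∈ C → a (S.image e) = a S := by
    have hli := hfs.1
    rw [Fintype.linearIndependent_iff] at hli
    have h0 : ∀ S : {S : Finset N // S ∈ C}, a S.1 - a (S.1.image e) = 0 := by
      apply hli
      funext T
      have h2 : (∑ S : {S : Finset N // S ∈ C},
            (a S.1 - a (S.1.image e)) • mmGame C S.1) T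
          = ∑ S ∈ C.attach,
            ((if (S.1 ∩ T.1).Nonempty then a S.1 else 0)
              - (if (S.1 ∩ T.1).Nonempty then a (S.1.image e) else 0)) := by
        rw [Finset.sum_apply, Finset.univ_eq_attach]
        refine Finset.sum_congr rfl fun S _ => ?_
        simp only [Pi.smul_apply, smul_eq_mul, mmGame]
        split_ifs <;> ring
      rw [h2, Finset.sum_sub_distrib, ← hrepA T, ← hrepA' T, sub_self,
        Pi.zero_apply]
    intro S hS
    exact (sub_eq_zero.mp (h0 ⟨S, hS⟩)).symm
  have htau : ∀ n : N, tau ψ γ n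
      = ∑ S ∈ C.attach, (if n ∈ S.1 then a S.1 / (S.1.card : ℝ) else 0) := by
    intro n
    have hset : ψ n = K'.filter (fun k => n ∈ userSet ψ k) := by
      ext k
      simp only [Finset.mem_filter, hK', Finset.mem_biUnion, Finset.mem_univ,
        true_and, huser]
      exact ⟨fun h => ⟨⟨n, h⟩, h⟩, fun h => h.2⟩
    calc tau ψ γ n = ∑ k ∈ ψ n, γ k / ((userSet ψ k).card : ℝ) := rfl
      _ = ∑ k ∈ K', (if n ∈ userSet ψ k
            then γ k / ((userSet ψ k).card : ℝ) else 0) := by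
          rw [hset, Finset.sum_filter]
      _ = ∑ S ∈ C, ∑ k ∈ K'.filter (fun k => userSet ψ k = S),
            (if n ∈ userSet ψ k then γ k / ((userSet ψ k).card : ℝ) else 0) :=
          (Finset.sum_fiberwise_of_maps_to hrep.1 _).symm
      _ = ∑ S ∈ C, (if n ∈ S then a S / (S.card : ℝ) else 0) := by
          refine Finset.sum_congr rfl fun S hS => ?_
          have hc : ∀ k ∈ K'.filter (fun k => userSet ψ k = S),
              (if n ∈ userSet ψ k then γ k / ((userSet ψ k).card : ℝ) else 0)
              = (if n ∈ S then γ k / (S.card : ℝ) else 0) := by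
            intro k hk
            rw [(Finset.mem_filter.1 hk).2]
          rw [Finset.sum_congr rfl hc]
          split_ifs
          · exact (Finset.sum_div _ _ _).symm
          · exact Finset.sum_const_zero
      _ = ∑ S ∈ C.attach, (if n ∈ S.1 then a S.1 / (S.1.card : ℝ) else 0) :=
          (Finset.sum_attach C _).symm
  rw [htau i, htau j]
  refine Finset.sum_nbij'
    (i := fun S : {S : Finset N // S ∈ C} => (⟨S.1.image e, hσC S.1 S.2⟩ : {S : Finset N // S ∈ C}))
    (j := fun S : {S : Finset N // S ∈ C} => (⟨S.1.image e, hσC S.1 S.2⟩ : {S : Finset N // S ∈ C}))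
    (fun S _ => Finset.mem_attach _ _) (fun S _ => Finset.mem_attach _ _)
    (fun S _ => Subtype.ext (himg2 S.1)) (fun S _ => Subtype.ext (himg2 S.1))
    (fun S _ => ?_)
  simp only [hmemimg, haeq S.1 S.2, hcard]
  simp only [he, Equiv.swap_apply_right]
end

section
/- Assume C has full span and let χ : ℝ^C → ℝ^N be the equitable solution, i.e., χ(v) = τ(ψ, γ) for any representation (ψ, γ) of v (this is well-defined by the invariance of the equitable solution across representations). If player i is a dummy in the game v : C → ℝ, then χ_i(v) = 0. -/
open Finset
open scoped Classical

/-- If `C` has full span and player `i` is a dummy in the game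
`v : C → ℝ`, then the equitable solution `χ(v)` (the common value of
`τ(ψ, γ)` across representations `(ψ, γ)` of `v`) satisfies `χ_i(v) = 0`. -/
theorem equitable_dummy {N : Type} [Fintype N] [DecidableEq N] [Nonempty N]
    (C : Finset (Finset N)) (hCne : C.Nonempty)
    (hmem : ∀ S ∈ C, S.Nonempty) (hcover : ∀ n : N, ∃ S ∈ C, n ∈ S)
    (hfs : FullSpan C) (v : {T : Finset N // T ∈ C} → ℝ)
    (i : N) (hdum : DummyPlayer C v i)
    {K : Type} (ψ : N → Finset K) (γ : K → ℝ) (hrep : IsRep C v ψ γ) :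
    tau ψ γ i = 0 := by
  classical
  obtain ⟨hUC', hv⟩ := hrep
  -- basic facts about user sets of facilities used by `i`
  have hUmem : ∀ k ∈ ψ i, i ∈ userSet ψ k := by
    intro k hk
    simp [userSet, hk]
  have hUC : ∀ k ∈ ψ i, userSet ψ k ∈ C := fun k hk =>
    hUC' k (Finset.mem_biUnion.mpr ⟨i, Finset.mem_univ i, hk⟩)
  have hbi : ∀ (T : Finset N) (k : K),
      k ∈ T.biUnion ψ ↔ (userSet ψ k ∩ T).Nonempty := by
    intro T k
    simp only [Finset.mem_biUnion, userSet, Finset.Nonempty, Finset.mem_inter,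
      Finset.mem_filter, Finset.mem_univ, true_and]
    tauto
  -- the coefficients
  set c : Finset N → ℝ :=
    fun A => ∑ k ∈ (ψ i).filter (fun k => userSet ψ k = A), γ k with hc
  -- erase facts
  have herase_ne : ∀ k ∈ ψ i, userSet ψ k ≠ {i} →
      ((userSet ψ k).erase i).Nonempty := by
    intro k hk hne
    rcases Finset.eq_empty_or_nonempty ((userSet ψ k).erase i) with h | h
    · rcases (Finset.erase_eq_empty_iff _ _).mp h with h' | h'
      · exact absurd h' (Finset.nonempty_iff_ne_empty.mp (hmem _ (hUC k hk)))
      · exact absurd h' hne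
    · exact h
  have herase_C : ∀ k ∈ ψ i, userSet ψ k ≠ {i} → (userSet ψ k).erase i ∈ C := by
    intro k hk hne
    have h3 := (hdum.2 _ (herase_ne k hk hne) (Finset.notMem_erase i _)).1
    rw [Finset.insert_erase (hUmem k hk)] at h3
    exact h3.mp (hUC k hk)
  -- key: the combination of MM-games vanishes at every coalition
  have key : ∀ T0 : {T : Finset N // T ∈ C},
      ∑ S ∈ C, (if i ∈ S then c S else - c (insert i S)) *
        (if (S ∩ T0.1).Nonempty then (1:ℝ) else 0) = 0 := by
    intro T0
    set ind : Finset N → ℝ :=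
      fun A => if (A ∩ T0.1).Nonempty then (1:ℝ) else 0 with hind
    have h1 : ∑ S ∈ C.filter (fun S => i ∈ S), c S * ind S =
        ∑ k ∈ ψ i, γ k * ind (userSet ψ k) := by
      rw [← Finset.sum_fiberwise_of_maps_to (t := C.filter (fun S => i ∈ S))
        (fun k hk => Finset.mem_filter.mpr ⟨hUC k hk, hUmem k hk⟩)
        (fun k => γ k * ind (userSet ψ k))]
      refine Finset.sum_congr rfl fun S hS => ?_
      rw [hc, Finset.sum_mul]
      exact Finset.sum_congr rfl fun k hk => by
        rw [(Finset.mem_filter.mp hk).2]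
    have hmaps : ∀ k ∈ (ψ i).filter (fun k => userSet ψ k ≠ {i}),
        (userSet ψ k).erase i ∈ C.filter (fun S => i ∉ S) := by
      intro k hk
      obtain ⟨hk1, hk2⟩ := Finset.mem_filter.mp hk
      exact Finset.mem_filter.mpr ⟨herase_C k hk1 hk2, Finset.notMem_erase i _⟩
    have h2 : ∑ S ∈ C.filter (fun S => i ∉ S), c (insert i S) * ind S =
        ∑ k ∈ (ψ i).filter (fun k => userSet ψ k ≠ {i}),
          γ k * ind ((userSet ψ k).erase i) := by
      rw [← Finset.sum_fiberwise_of_maps_to hmaps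
        (fun k => γ k * ind ((userSet ψ k).erase i))]
      refine Finset.sum_congr rfl fun S hS => ?_
      obtain ⟨hSC, hiS⟩ := Finset.mem_filter.mp hS
      have hSne : S.Nonempty := hmem S hSC
      have hfib : Finset.filter (fun k => (userSet ψ k).erase i = S)
            ((ψ i).filter (fun k => userSet ψ k ≠ {i}))
          = (ψ i).filter (fun k => userSet ψ k = insert i S) := by
        ext k
        simp only [Finset.mem_filter, and_assoc]
        constructor
        · rintro ⟨hk, hne, he⟩
          refine ⟨hk, ?_⟩
          rw [← he, Finset.insert_erase (hUmem k hk)]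
        · rintro ⟨hk, he⟩
          refine ⟨hk, ?_, ?_⟩
          · intro h
            rw [h] at he
            have : i ∈ S := by
              have := hSne.choose_spec
              have hx : hSne.choose ∈ insert i S := Finset.mem_insert_of_mem this
              rw [← he] at hx
              have hxi : hSne.choose = i := Finset.mem_singleton.mp hx
              rwa [← hxi]
            exact hiS this
          · rw [he, Finset.erase_insert hiS]
      rw [hfib, hc, Finset.sum_mul]
      refine Finset.sum_congr rfl fun k hk => ?_
      obtain ⟨hk1, hk2⟩ := Finset.mem_filter.mp hk
      rw [hk2, Finset.erase_insert hiS]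
    have h3 : ∑ k ∈ (ψ i).filter (fun k => userSet ψ k ≠ {i}),
          γ k * ind ((userSet ψ k).erase i)
        = ∑ k ∈ ψ i, γ k * ind ((userSet ψ k).erase i) := by
      rw [← Finset.sum_filter_add_sum_filter_not (ψ i)
        (fun k => userSet ψ k ≠ {i}) (fun k => γ k * ind ((userSet ψ k).erase i))]
      have : ∑ k ∈ (ψ i).filter (fun k => ¬ userSet ψ k ≠ {i}),
          γ k * ind ((userSet ψ k).erase i) = 0 := by
        refine Finset.sum_eq_zero fun k hk => ?_
        obtain ⟨hk1, hk2⟩ := Finset.mem_filter.mp hk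
        rw [not_not] at hk2
        rw [hk2]
        simp [hind]
      rw [this, add_zero]
    -- reduce the goal to a single sum over ψ i
    have hsplit : ∑ S ∈ C, (if i ∈ S then c S else - c (insert i S)) * ind S
        = ∑ k ∈ ψ i, γ k * (ind (userSet ψ k) - ind ((userSet ψ k).erase i)) := by
      rw [← Finset.sum_filter_add_sum_filter_not C (fun S => i ∈ S)]
      have e1 : ∑ S ∈ C.filter (fun S => i ∈ S),
          (if i ∈ S then c S else - c (insert i S)) * ind S
          = ∑ S ∈ C.filter (fun S => i ∈ S), c S * ind S :=
        Finset.sum_congr rfl fun S hS => by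
          rw [if_pos (Finset.mem_filter.mp hS).2]
      have e2 : ∑ S ∈ C.filter (fun S => ¬ i ∈ S),
          (if i ∈ S then c S else - c (insert i S)) * ind S
          = - ∑ S ∈ C.filter (fun S => i ∉ S), c (insert i S) * ind S := by
        rw [← Finset.sum_neg_distrib]
        exact Finset.sum_congr rfl fun S hS => by
          rw [if_neg (Finset.mem_filter.mp hS).2, neg_mul]
      rw [e1, e2, h1, h2, h3, ← sub_eq_add_neg, ← Finset.sum_sub_distrib]
      exact Finset.sum_congr rfl fun k hk => by ring
    rw [hsplit]
    by_cases hiT : i ∈ T0.1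
    · -- i ∈ T0
      have hindU : ∀ k ∈ ψ i, ind (userSet ψ k) = 1 := by
        intro k hk
        rw [hind]
        exact if_pos ⟨i, Finset.mem_inter.mpr ⟨hUmem k hk, hiT⟩⟩
      set T : Finset N := T0.1.erase i with hT
      have hindE : ∀ k : K, ind ((userSet ψ k).erase i)
          = if (userSet ψ k ∩ T).Nonempty then (1:ℝ) else 0 := by
        intro k
        have : (userSet ψ k).erase i ∩ T0.1 = userSet ψ k ∩ T := by
          ext x
          simp only [Finset.mem_inter, Finset.mem_erase, hT]
          tauto
        rw [hind]
        simp only [this]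
      have hsum1 : ∑ k ∈ ψ i, γ k * (ind (userSet ψ k) - ind ((userSet ψ k).erase i))
          = ∑ k ∈ ψ i, γ k - ∑ k ∈ (ψ i) ∩ T.biUnion ψ, γ k := by
        have hfe : (ψ i) ∩ T.biUnion ψ
            = (ψ i).filter (fun k => (userSet ψ k ∩ T).Nonempty) := by
          ext k
          simp only [Finset.mem_inter, Finset.mem_filter, hbi]
        rw [hfe, Finset.sum_filter, ← Finset.sum_sub_distrib]
        refine Finset.sum_congr rfl fun k hk => ?_
        rw [hindU k hk, hindE k]
        by_cases hkT : (userSet ψ k ∩ T).Nonempty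
        · rw [if_pos hkT, if_pos hkT]; ring
        · rw [if_neg hkT, if_neg hkT]; ring
      rw [hsum1]
      by_cases hT0 : T0.1 = {i}
      · -- T0 = {i}
        have hTe : T = ∅ := by rw [hT, hT0]; simp
        have h5 : ({i} : Finset N) ∈ C := hT0 ▸ T0.2
        have h6 := hv ⟨{i}, h5⟩
        rw [Finset.singleton_biUnion] at h6
        rw [hTe]
        simp only [Finset.biUnion_empty, Finset.inter_empty, Finset.sum_empty]
        rw [← h6, hdum.1 h5, sub_zero]
      · -- T0 ≠ {i}
        have hTne : T.Nonempty := by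
          rcases Finset.eq_empty_or_nonempty T with h | h
          · rcases (Finset.erase_eq_empty_iff _ _).mp h with h' | h'
            · exact absurd h' (Finset.nonempty_iff_ne_empty.mp (hmem _ T0.2))
            · exact absurd h' hT0
          · exact h
        have hins : insert i T = T0.1 := Finset.insert_erase hiT
        have hiTm : i ∉ T := Finset.notMem_erase i _
        have hTC : T ∈ C := by
          have := (hdum.2 T hTne hiTm).1
          rw [hins] at this
          exact this.mp T0.2
        have hinsC : insert i T ∈ C := by rw [hins]; exact T0.2
        have hveq := (hdum.2 T hTne hiTm).2 hinsC hTC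
        have hv1 := hv ⟨insert i T, hinsC⟩
        have hv2 := hv ⟨T, hTC⟩
        rw [hveq, hv2] at hv1
        rw [Finset.biUnion_insert] at hv1
        have hui := Finset.sum_union_inter (s₁ := ψ i) (s₂ := T.biUnion ψ) (f := γ)
        rw [← hv1] at hui
        linarith
    · -- i ∉ T0
      refine Finset.sum_eq_zero fun k hk => ?_
      have : (userSet ψ k).erase i ∩ T0.1 = userSet ψ k ∩ T0.1 := by
        ext x
        simp only [Finset.mem_inter, Finset.mem_erase]
        constructor
        · rintro ⟨⟨_, hxU⟩, hxT⟩; exact ⟨hxU, hxT⟩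
        · rintro ⟨hxU, hxT⟩
          exact ⟨⟨fun h => hiT (h ▸ hxT), hxU⟩, hxT⟩
      rw [hind]
      simp only [this, sub_self, mul_zero]
  -- the combination as a vector
  have hzero : ∑ S : {S : Finset N // S ∈ C},
      (fun S : {S : Finset N // S ∈ C} =>
        if i ∈ S.1 then c S.1 else - c (insert i S.1)) S • mmGame C S.1 = 0 := by
    funext T0
    simp only [Finset.sum_apply, Pi.smul_apply, smul_eq_mul, Pi.zero_apply, mmGame]
    rw [Finset.sum_coe_sort C (fun S =>
      (if i ∈ S then c S else - c (insert i S)) *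
        (if (S ∩ T0.1).Nonempty then (1:ℝ) else 0))]
    exact key T0
  have he0 := Fintype.linearIndependent_iff.mp hfs.1
    (fun S : {S : Finset N // S ∈ C} =>
      if i ∈ S.1 then c S.1 else - c (insert i S.1)) hzero
  have hcS : ∀ (S : Finset N) (hS : S ∈ C), i ∈ S → c S = 0 := by
    intro S hS hiS
    have := he0 ⟨S, hS⟩
    change (if i ∈ S then c S else - c (insert i S)) = 0 at this
    rwa [if_pos hiS] at this
  -- conclude
  show ∑ k ∈ ψ i, γ k / ((userSet ψ k).card : ℝ) = 0
  rw [← Finset.sum_fiberwise_of_maps_to (t := C.filter (fun S => i ∈ S))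
    (fun k hk => Finset.mem_filter.mpr ⟨hUC k hk, hUmem k hk⟩)
    (fun k => γ k / ((userSet ψ k).card : ℝ))]
  refine Finset.sum_eq_zero fun S hS => ?_
  obtain ⟨hSC, hiS⟩ := Finset.mem_filter.mp hS
  have : ∑ k ∈ (ψ i).filter (fun k => userSet ψ k = S),
      γ k / ((userSet ψ k).card : ℝ)
      = (∑ k ∈ (ψ i).filter (fun k => userSet ψ k = S), γ k) / (S.card : ℝ) := by
    rw [Finset.sum_div]
    exact Finset.sum_congr rfl fun k hk => by
      rw [(Finset.mem_filter.mp hk).2]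
  rw [this]
  have hc0 : c S = 0 := hcS S hSC hiS
  change (∑ k ∈ (ψ i).filter (fun k => userSet ψ k = S), γ k) = 0 at hc0
  rw [hc0, zero_div]
end

section
/- Assume C has full span and let χ : ℝ^C → ℝ^N be the equitable solution, i.e., χ(v) = τ(ψ, γ) for any representation (ψ, γ) of v (this is well-defined by the invariance of the equitable solution across representations). Then χ is linear: χ(v + w) = χ(v) + χ(w) for all games v, w : C → ℝ, and χ(c·v) = c·χ(v) for every scalar c ∈ ℝ. -/
open Finset
open scoped Classical

lemma rep_coeff {N : Type} [Fintype N] [DecidableEq N] (C : Finset (Finset N))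
    (v : {T : Finset N // T ∈ C} → ℝ) {K : Type} (ψ : N → Finset K) (γ : K → ℝ)
    (h : IsRep C v ψ γ) :
    ∃ g : {S : Finset N // S ∈ C} → ℝ,
      v = ∑ S : {S : Finset N // S ∈ C}, g S • mmGame C S.1 ∧
      ∀ n : N, tau ψ γ n =
        ∑ S : {S : Finset N // S ∈ C},
          g S * (if n ∈ S.1 then 1 / (S.1.card : ℝ) else 0) := by
  classical
  set A := Finset.univ.biUnion ψ with hA
  have memUS : ∀ (k : K) (n : N), n ∈ userSet ψ k ↔ k ∈ ψ n := by
    intro k n; simp [userSet]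
  have key : ∀ (T : Finset N) (k : K),
      (userSet ψ k ∩ T).Nonempty ↔ k ∈ T.biUnion ψ := by
    intro T k
    simp only [Finset.Nonempty, Finset.mem_inter, memUS, Finset.mem_biUnion]
    tauto
  have memA : ∀ {k : K} {T : Finset N}, k ∈ T.biUnion ψ → k ∈ A := by
    intro k T hk
    obtain ⟨m, _, hkm⟩ := Finset.mem_biUnion.mp hk
    exact Finset.mem_biUnion.mpr ⟨m, Finset.mem_univ m, hkm⟩
  refine ⟨fun S => ∑ k ∈ A.filter (fun k => userSet ψ k = S.1), γ k, ?_, ?_⟩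
  · funext T
    have h1 : v T = ∑ k ∈ T.1.biUnion ψ, γ k := h.2 T
    have h2 : (∑ S : {S : Finset N // S ∈ C},
        (∑ k ∈ A.filter (fun k => userSet ψ k = S.1), γ k) • mmGame C S.1) T
        = ∑ S : {S : Finset N // S ∈ C},
            ∑ k ∈ A.filter (fun k => userSet ψ k = S.1),
              (if (userSet ψ k ∩ T.1).Nonempty then γ k else 0) := by
      rw [Finset.sum_apply]
      refine Finset.sum_congr rfl fun S _ => ?_
      rw [Pi.smul_apply, smul_eq_mul, Finset.sum_mul]
      refine Finset.sum_congr rfl fun k hk => ?_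
      have hu : userSet ψ k = S.1 := (Finset.mem_filter.mp hk).2
      simp only [mmGame, hu]
      by_cases hc : (S.1 ∩ T.1).Nonempty <;> simp [hc]
    have h3 : ∑ S : {S : Finset N // S ∈ C},
        ∑ k ∈ A.filter (fun k => userSet ψ k = S.1),
          (if (userSet ψ k ∩ T.1).Nonempty then γ k else 0)
        = ∑ k ∈ A, (if (userSet ψ k ∩ T.1).Nonempty then γ k else 0) := by
      rw [Finset.sum_coe_sort C (fun S => ∑ k ∈ A.filter (fun k => userSet ψ k = S),
        (if (userSet ψ k ∩ T.1).Nonempty then γ k else 0))]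
      exact Finset.sum_fiberwise_of_maps_to (fun k hk => h.1 k hk) _
    have h4 : A.filter (fun k => (userSet ψ k ∩ T.1).Nonempty) = T.1.biUnion ψ := by
      ext k
      rw [Finset.mem_filter, key]
      exact ⟨fun hk => hk.2, fun hk => ⟨memA hk, hk⟩⟩
    rw [h1, h2, h3, ← Finset.sum_filter, h4]
  · intro n
    have hpsi : ψ n = A.filter (fun k => n ∈ userSet ψ k) := by
      ext k
      rw [Finset.mem_filter, memUS]
      exact ⟨fun hk => ⟨Finset.mem_biUnion.mpr ⟨n, Finset.mem_univ n, hk⟩, hk⟩,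
        fun hk => hk.2⟩
    have h1 : tau ψ γ n
        = ∑ k ∈ A, (if n ∈ userSet ψ k then γ k / ((userSet ψ k).card : ℝ) else 0) := by
      rw [tau, hpsi, ← Finset.sum_filter]
    have h2 : ∑ k ∈ A, (if n ∈ userSet ψ k then γ k / ((userSet ψ k).card : ℝ) else 0)
        = ∑ S : {S : Finset N // S ∈ C},
            ∑ k ∈ A.filter (fun k => userSet ψ k = S.1),
              (if n ∈ userSet ψ k then γ k / ((userSet ψ k).card : ℝ) else 0) := by
      rw [Finset.sum_coe_sort C (fun S => ∑ k ∈ A.filter (fun k => userSet ψ k = S),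
        (if n ∈ userSet ψ k then γ k / ((userSet ψ k).card : ℝ) else 0))]
      exact (Finset.sum_fiberwise_of_maps_to (fun k hk => h.1 k hk) _).symm
    rw [h1, h2]
    refine Finset.sum_congr rfl fun S _ => ?_
    rw [Finset.sum_mul]
    refine Finset.sum_congr rfl fun k hk => ?_
    have hu : userSet ψ k = S.1 := (Finset.mem_filter.mp hk).2
    rw [hu]
    by_cases hn : n ∈ S.1 <;> simp [hn, div_eq_mul_inv, one_div]

lemma coeff_unique {N : Type} [DecidableEq N] (C : Finset (Finset N))
    (hfs : FullSpan C) (a b : {S : Finset N // S ∈ C} → ℝ)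
    (h : ∑ S : {S : Finset N // S ∈ C}, a S • mmGame C S.1
       = ∑ S : {S : Finset N // S ∈ C}, b S • mmGame C S.1) : a = b := by
  classical
  funext S
  have hz : ∑ T : {S : Finset N // S ∈ C}, (a T - b T) • mmGame C T.1 = 0 := by
    simp only [sub_smul, Finset.sum_sub_distrib, h, sub_self]
  have := Fintype.linearIndependent_iff.mp hfs.1 (fun T => a T - b T) hz S
  linarith

/-- If `C` has full span the equitable solution
`χ : ℝ^C → ℝ^N` (with `χ(v) = τ(ψ, γ)` for any representation `(ψ, γ)` of
`v`) is linear: `χ(v + w) = χ(v) + χ(w)` and `χ(c • v) = c • χ(v)`. -/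
theorem equitable_linear {N : Type} [Fintype N] [DecidableEq N] [Nonempty N]
    (C : Finset (Finset N)) (hCne : C.Nonempty)
    (hmem : ∀ S ∈ C, S.Nonempty) (hcover : ∀ n : N, ∃ S ∈ C, n ∈ S)
    (hfs : FullSpan C) :
    (∀ (v w : {T : Finset N // T ∈ C} → ℝ)
      (Kv : Type) (ψv : N → Finset Kv) (γv : Kv → ℝ)
      (Kw : Type) (ψw : N → Finset Kw) (γw : Kw → ℝ)
      (K : Type) (ψ : N → Finset K) (γ : K → ℝ),
      IsRep C v ψv γv → IsRep C w ψw γw → IsRep C (v + w) ψ γ →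
      ∀ n : N, tau ψ γ n = tau ψv γv n + tau ψw γw n) ∧
    (∀ (v : {T : Finset N // T ∈ C} → ℝ) (c : ℝ)
      (Kv : Type) (ψv : N → Finset Kv) (γv : Kv → ℝ)
      (K : Type) (ψ : N → Finset K) (γ : K → ℝ),
      IsRep C v ψv γv → IsRep C (c • v) ψ γ →
      ∀ n : N, tau ψ γ n = c * tau ψv γv n) := by
  constructor
  · intro v w Kv ψv γv Kw ψw γw K ψ γ hv hw hvw n
    obtain ⟨a, hva, hta⟩ := rep_coeff C v ψv γv hv
    obtain ⟨b, hvb, htb⟩ := rep_coeff C w ψw γw hw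
    obtain ⟨cc, hvc, htc⟩ := rep_coeff C (v + w) ψ γ hvw
    have hcc : cc = fun S => a S + b S := by
      refine coeff_unique C hfs cc _ ?_
      rw [← hvc, hva, hvb]
      simp [add_smul, Finset.sum_add_distrib]
    rw [htc n, hta n, htb n, hcc, ← Finset.sum_add_distrib]
    exact Finset.sum_congr rfl fun S _ => by ring
  · intro v c Kv ψv γv K ψ γ hv hcv n
    obtain ⟨a, hva, hta⟩ := rep_coeff C v ψv γv hv
    obtain ⟨cc, hvc, htc⟩ := rep_coeff C (c • v) ψ γ hcv
    have hcc : cc = fun S => c * a S := by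
      refine coeff_unique C hfs cc _ ?_
      rw [← hvc, hva]
      simp [Finset.smul_sum, smul_smul]
    rw [htc n, hta n, hcc, Finset.mul_sum]
    exact Finset.sum_congr rfl fun S _ => by ring
end

section
/- Assume C has full span, let v = Σ_{S∈C} c_S·w_S be the unique expansion of v : C → ℝ in the MM-basis, and suppose players i and j are symmetric in v. If A ∈ C with i ∈ A and j ∉ A, then B = (A∖{i})∪{j} ∈ C and c_A = c_B. -/
open Finset
open scoped Classical

lemma aux_image_swap_of_mem_notMem {N : Type} [DecidableEq N] (i j : N)
    (S : Finset N) (hi : i ∈ S) (hj : j ∉ S) :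
    S.image (Equiv.swap i j) = insert j (S.erase i) := by
  ext x
  simp only [Finset.mem_image, Finset.mem_insert, Finset.mem_erase, Equiv.swap_apply_def]
  constructor
  · rintro ⟨a, ha, rfl⟩
    by_cases h1 : a = i
    · simp [h1]
    · by_cases h2 : a = j
      · exact absurd (h2 ▸ ha) hj
      · simp [h1, h2, ha]
  · rintro (rfl | ⟨hx, hxS⟩)
    · exact ⟨i, hi, by simp⟩
    · refine ⟨x, hxS, ?_⟩
      have hxj : x ≠ j := fun h => hj (h ▸ hxS)
      simp [hx, hxj]

lemma aux_image_swap_fixed {N : Type} [DecidableEq N] (i j : N)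
    (S : Finset N) (h : i ∈ S ↔ j ∈ S) :
    S.image (Equiv.swap i j) = S := by
  ext x
  simp only [Finset.mem_image]
  constructor
  · rintro ⟨a, ha, rfl⟩
    rw [Equiv.swap_apply_def]
    split_ifs with h1 h2
    · exact h.mp (h1 ▸ ha)
    · exact h.mpr (h2 ▸ ha)
    · exact ha
  · intro hx
    refine ⟨Equiv.swap i j x, ?_, Equiv.swap_apply_self i j x⟩
    rw [Equiv.swap_apply_def]
    split_ifs with h1 h2
    · exact h.mp (h1 ▸ hx)
    · exact h.mpr (h2 ▸ hx)
    · exact hx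

lemma aux_image_swap_swap {N : Type} [DecidableEq N] (i j : N) (S : Finset N) :
    (S.image (Equiv.swap i j)).image (Equiv.swap i j) = S := by
  ext x
  simp only [Finset.mem_image]
  constructor
  · rintro ⟨a, ⟨b, hb, rfl⟩, rfl⟩
    simpa [Equiv.swap_apply_self] using hb
  · intro hx
    exact ⟨Equiv.swap i j x, ⟨x, hx, rfl⟩, Equiv.swap_apply_self i j x⟩

lemma aux_swap_inter {N : Type} [DecidableEq N] (i j : N) (S T : Finset N) :
    ((S.image (Equiv.swap i j)) ∩ T).Nonempty ↔ (S ∩ T.image (Equiv.swap i j)).Nonempty := by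
  constructor
  · rintro ⟨x, hx⟩
    rw [Finset.mem_inter, Finset.mem_image] at hx
    obtain ⟨⟨a, haS, rfl⟩, hxT⟩ := hx
    exact ⟨a, Finset.mem_inter.mpr ⟨haS,
      Finset.mem_image.mpr ⟨Equiv.swap i j a, hxT, by simp⟩⟩⟩
  · rintro ⟨x, hx⟩
    rw [Finset.mem_inter, Finset.mem_image] at hx
    obtain ⟨hxS, a, haT, rfl⟩ := hx
    exact ⟨a, Finset.mem_inter.mpr
      ⟨Finset.mem_image.mpr ⟨Equiv.swap i j a, hxS, by simp⟩, haT⟩⟩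

/-- If `C` has full span, `v = Σ_{S∈C} c_S • w_S` is the
expansion of `v` in the MM-basis, and players `i, j` are symmetric in `v`,
then for `A ∈ C` with `i ∈ A`, `j ∉ A`, the coalition `B = (A∖{i})∪{j}` is in
`C` and `c_A = c_B`. -/
theorem symmetric_players_equal_coefficients {N : Type} [Fintype N]
    [DecidableEq N] [Nonempty N] (C : Finset (Finset N)) (hCne : C.Nonempty)
    (hmem : ∀ S ∈ C, S.Nonempty) (hcover : ∀ n : N, ∃ S ∈ C, n ∈ S)
    (hfs : FullSpan C) (v : {T : Finset N // T ∈ C} → ℝ)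
    (c : {S : Finset N // S ∈ C} → ℝ)
    (hv : v = ∑ S : {S : Finset N // S ∈ C}, c S • mmGame C S.1)
    (i j : N) (hsym : SymmetricPlayers C v i j)
    (A : Finset N) (hA : A ∈ C) (hiA : i ∈ A) (hjA : j ∉ A) :
    ∃ hB : insert j (A.erase i) ∈ C,
      c ⟨A, hA⟩ = c ⟨insert j (A.erase i), hB⟩ := by
  -- the image of any coalition under the swap is a coalition
  have himg : ∀ S ∈ C, S.image (Equiv.swap i j) ∈ C := by
    intro S hS
    by_cases hi : i ∈ S <;> by_cases hj : j ∈ S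
    · rwa [aux_image_swap_fixed i j S (by simp [hi, hj])]
    · rw [aux_image_swap_of_mem_notMem i j S hi hj]
      have h := (hsym (S.erase i) (Finset.notMem_erase i S)
        (fun h => hj (Finset.mem_of_mem_erase h))).1
      rw [Finset.insert_erase hi] at h
      exact h.mp hS
    · rw [Equiv.swap_comm i j, aux_image_swap_of_mem_notMem j i S hj hi]
      have h := (hsym (S.erase j) (fun h => hi (Finset.mem_of_mem_erase h))
        (Finset.notMem_erase j S)).1
      rw [Finset.insert_erase hj] at h
      exact h.mpr hS
    · rwa [aux_image_swap_fixed i j S (by simp [hi, hj])]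
  set σ : {S : Finset N // S ∈ C} → {S : Finset N // S ∈ C} :=
    fun S => ⟨S.1.image (Equiv.swap i j), himg S.1 S.2⟩ with hσdef
  have hσσ : Function.Involutive σ := fun S =>
    Subtype.ext (aux_image_swap_swap i j S.1)
  -- MM-games transform covariantly
  have hmm : ∀ S T : {S : Finset N // S ∈ C},
      mmGame C (σ S).1 T = mmGame C S.1 (σ T) := by
    intro S T
    simp only [mmGame, hσdef]
    by_cases h : (S.1 ∩ T.1.image (Equiv.swap i j)).Nonempty
    · rw [if_pos ((aux_swap_inter i j S.1 T.1).mpr h), if_pos h]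
    · rw [if_neg (fun hh => h ((aux_swap_inter i j S.1 T.1).mp hh)), if_neg h]
  -- v is invariant under σ
  have hvσ : ∀ T : {S : Finset N // S ∈ C}, v (σ T) = v T := by
    intro T
    by_cases hi : i ∈ T.1 <;> by_cases hj : j ∈ T.1
    · exact congrArg v (Subtype.ext (aux_image_swap_fixed i j T.1 (by simp [hi, hj])))
    · have h1 : (σ T).1 = insert j (T.1.erase i) :=
        aux_image_swap_of_mem_notMem i j T.1 hi hj
      have hins : insert i (T.1.erase i) = T.1 := Finset.insert_erase hi
      have hiC : insert i (T.1.erase i) ∈ C := by rw [hins]; exact T.2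
      have hjC : insert j (T.1.erase i) ∈ C := h1 ▸ (σ T).2
      have heq := (hsym (T.1.erase i) (Finset.notMem_erase i T.1)
        (fun h => hj (Finset.mem_of_mem_erase h))).2 hiC hjC
      calc v (σ T) = v ⟨insert j (T.1.erase i), hjC⟩ := congrArg v (Subtype.ext h1)
        _ = v ⟨insert i (T.1.erase i), hiC⟩ := heq.symm
        _ = v T := congrArg v (Subtype.ext hins)
    · have h1 : (σ T).1 = insert i (T.1.erase j) := by
        simp only [hσdef]
        rw [Equiv.swap_comm i j]
        exact aux_image_swap_of_mem_notMem j i T.1 hj hi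
      have hins : insert j (T.1.erase j) = T.1 := Finset.insert_erase hj
      have hjC : insert j (T.1.erase j) ∈ C := by rw [hins]; exact T.2
      have hiC : insert i (T.1.erase j) ∈ C := h1 ▸ (σ T).2
      have heq := (hsym (T.1.erase j) (fun h => hi (Finset.mem_of_mem_erase h))
        (Finset.notMem_erase j T.1)).2 hiC hjC
      calc v (σ T) = v ⟨insert i (T.1.erase j), hiC⟩ := congrArg v (Subtype.ext h1)
        _ = v ⟨insert j (T.1.erase j), hjC⟩ := heq
        _ = v T := congrArg v (Subtype.ext hins)
    · exact congrArg v (Subtype.ext (aux_image_swap_fixed i j T.1 (by simp [hi, hj])))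
  -- pointwise value of the expansion
  have hvT : ∀ T : {S : Finset N // S ∈ C},
      v T = ∑ S : {S : Finset N // S ∈ C}, c S * mmGame C S.1 T := by
    intro T
    rw [hv]
    simp [Finset.sum_apply, Pi.smul_apply, smul_eq_mul]
  -- reindexed sum
  have h2 : ∀ T : {S : Finset N // S ∈ C},
      (∑ S : {S : Finset N // S ∈ C}, c (σ S) * mmGame C S.1 T) = v T := by
    intro T
    have hb := Fintype.sum_bijective σ hσσ.bijective
      (fun S => c S * mmGame C S.1 (σ T))
      (fun S => c (σ S) * mmGame C S.1 T)
      (fun S => by simp only [hσσ S, hmm S T])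
    rw [← hb, ← hvT (σ T), hvσ T]
  -- linear independence gives c ∘ σ = c
  have hg : ∀ S : {S : Finset N // S ∈ C}, c S - c (σ S) = 0 := by
    apply Fintype.linearIndependent_iff.mp hfs.1
    funext T
    simp only [Finset.sum_apply, Pi.smul_apply, smul_eq_mul, Pi.zero_apply, sub_mul]
    rw [Finset.sum_sub_distrib, ← hvT T, h2 T, sub_self]
  have hB : insert j (A.erase i) ∈ C := by
    have h := himg A hA
    rwa [aux_image_swap_of_mem_notMem i j A hiA hjA] at h
  refine ⟨hB, ?_⟩
  have hσA : σ ⟨A, hA⟩ = ⟨insert j (A.erase i), hB⟩ :=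
    Subtype.ext (aux_image_swap_of_mem_notMem i j A hiA hjA)
  have := hg ⟨A, hA⟩
  rw [hσA] at this
  linarith
end

section
/- Assume C is a semi-algebra (N ∈ C and for every S ∈ C with S ≠ N also N∖S ∈ C). For every S ∈ C, the dual of the MM-game w_S is the unanimity game v_S, and the dual of the unanimity game v_S is the MM-game w_S: (w_S)* = v_S and (v_S)* = w_S. -/
open Finset
open scoped Classical

/-- The extension of a game `v : C → ℝ` to all of `2^N` by `0`. -/
noncomputable def extendGame {N : Type} [DecidableEq N] (C : Finset (Finset N))
    (v : {T : Finset N // T ∈ C} → ℝ) (S : Finset N) : ℝ :=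
  if h : S ∈ C then v ⟨S, h⟩ else 0

/-- The dual game `v*` of `v : C → ℝ` (for a semi-algebra `C`):
`v*(T) = v(N) − v(N∖T)`, with `v(∅)` understood to be `0`. -/
noncomputable def dualGame {N : Type} [Fintype N] [DecidableEq N]
    (C : Finset (Finset N)) (v : {T : Finset N // T ∈ C} → ℝ) :
    {T : Finset N // T ∈ C} → ℝ :=
  fun T => extendGame C v Finset.univ - extendGame C v (Finset.univ \ T.1)

/-- The unanimity game `v_S`, as a vector in `ℝ^C`:
`v_S(T) = 1` if `S ⊆ T` and `0` otherwise. -/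
noncomputable def unanimityGame {N : Type} [DecidableEq N]
    (C : Finset (Finset N)) (S : Finset N) : {T : Finset N // T ∈ C} → ℝ :=
  fun T => if S ⊆ T.1 then 1 else 0

/-- If `C` is a semi-algebra, then for every `S ∈ C` the MM-game
`w_S` and the unanimity game `v_S` are duals of each other:
`(w_S)* = v_S` and `(v_S)* = w_S`. -/
theorem mm_unanimity_dual {N : Type} [Fintype N] [DecidableEq N] [Nonempty N]
    (C : Finset (Finset N)) (hCne : C.Nonempty)
    (hmem : ∀ S ∈ C, S.Nonempty) (hcover : ∀ n : N, ∃ S ∈ C, n ∈ S)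
    (hsa : IsSemiAlgebra C) (S : Finset N) (hS : S ∈ C) :
    dualGame C (mmGame C S) = unanimityGame C S ∧
    dualGame C (unanimityGame C S) = mmGame C S := by
  obtain ⟨hN, hcomp⟩ := hsa
  have hSne : S.Nonempty := hmem S hS
  have hempty : (∅ : Finset N) ∉ C := fun h => by
    simpa using (hmem ∅ h)
  constructor <;> funext T <;>
    simp only [dualGame, extendGame, dif_pos hN, mmGame, unanimityGame]
  · by_cases hT : T.1 = Finset.univ
    · have : Finset.univ \ T.1 = (∅ : Finset N) := by simp [hT]
      rw [this, dif_neg hempty]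
      have h1 : (S ∩ Finset.univ).Nonempty := by simpa using hSne
      simp [h1, hT, Finset.subset_univ, hSne.ne_empty]
    · have hTc : Finset.univ \ T.1 ∈ C := hcomp T.1 T.2 hT
      rw [dif_pos hTc]
      have h1 : (S ∩ Finset.univ).Nonempty := by simpa using hSne
      rw [if_pos h1]
      by_cases hsub : S ⊆ T.1
      · have : ¬ (S ∩ (Finset.univ \ T.1)).Nonempty := by
          rw [Finset.not_nonempty_iff_eq_empty, Finset.eq_empty_iff_forall_notMem]
          intro x hx
          simp only [Finset.mem_inter, Finset.mem_sdiff] at hx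
          exact hx.2.2 (hsub hx.1)
        simp [this, hsub]
      · have : (S ∩ (Finset.univ \ T.1)).Nonempty := by
          obtain ⟨x, hxS, hxT⟩ := Finset.not_subset.mp hsub
          exact ⟨x, by simp [hxS, hxT]⟩
        simp [this, hsub]
  · by_cases hT : T.1 = Finset.univ
    · have : Finset.univ \ T.1 = (∅ : Finset N) := by simp [hT]
      rw [this, dif_neg hempty]
      have h1 : (S ∩ T.1).Nonempty := by simpa [hT] using hSne
      simp [h1, Finset.subset_univ]
    · have hTc : Finset.univ \ T.1 ∈ C := hcomp T.1 T.2 hT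
      rw [dif_pos hTc]
      rw [if_pos (Finset.subset_univ S)]
      by_cases hne : (S ∩ T.1).Nonempty
      · have : ¬ S ⊆ Finset.univ \ T.1 := by
          obtain ⟨x, hx⟩ := hne
          simp only [Finset.mem_inter] at hx
          intro h
          exact (Finset.mem_sdiff.mp (h hx.1)).2 hx.2
        simp [this, hne]
      · have : S ⊆ Finset.univ \ T.1 := by
          intro x hx
          simp only [Finset.mem_sdiff, Finset.mem_univ, true_and]
          intro hxT
          exact hne ⟨x, Finset.mem_inter.mpr ⟨hx, hxT⟩⟩
        simp [this, hne]
end
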